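/- arXiv:1707.01674 — 6 statements merged into one kernel-verified Lean document; each statement's English description precedes it below -/
import Mathlib

section
/- Let I ∈ 𝕊, n ∈ ℤ and a : (0,∞) → ℍ be twice continuously differentiable. Define g : {(x,y) ∈ ℝ×(0,∞)} → ℍ in polar coordinates x = r cos θ, y = r sin θ (r > 0, 0 < θ < π) by g(x,y) = (cos nθ + I sin nθ)·a(r). Then at every such point, −(1/4)(∂²g/∂x² + ∂²g/∂y²) + (1/2)(x·∂g/∂x + y·∂g/∂y) + (I/2)·(x·∂g/∂y − y·∂g/∂x) = −((cos nθ + I sin nθ)/(4r²))·[ r²·a''(r) + (1 − 2r²)·r·a'(r) + (2n r² − n²)·a(r) ], where I acts by left multiplication. -/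
open MeasureTheory Quaternion

noncomputable section

lemma coe_smul_one (r : ℝ) : ((r : ℝ) : ℍ[ℝ]) = r • (1 : ℍ[ℝ]) := by
  rw [← Algebra.algebraMap_eq_smul_one]; rfl

/-- The exponential-like factor. -/
def Ee (I : ℍ[ℝ]) (t : ℝ) : ℍ[ℝ] := ((Real.cos t : ℝ) : ℍ[ℝ]) + Real.sin t • I

lemma hasDerivAt_Ee (I : ℍ[ℝ]) (hI : I ^ 2 = -1) (t : ℝ) :
    HasDerivAt (Ee I) (I * Ee I t) t := by
  have h1 : HasDerivAt (fun t : ℝ => ((Real.cos t : ℝ) : ℍ[ℝ]))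
      ((-Real.sin t) • (1 : ℍ[ℝ])) t := by
    have := (Real.hasDerivAt_cos t).smul_const (1 : ℍ[ℝ])
    simp only [coe_smul_one]
    simpa using this
  have h2 : HasDerivAt (fun t : ℝ => Real.sin t • I) (Real.cos t • I) t :=
    (Real.hasDerivAt_sin t).smul_const I
  have h := h1.add h2
  have he : ((fun t : ℝ => ((Real.cos t : ℝ) : ℍ[ℝ])) + fun t : ℝ => Real.sin t • I) = Ee I := rfl
  rw [he] at h
  refine h.congr_deriv ?_
  rw [Ee, mul_add, mul_smul_comm, ← sq, hI, coe_smul_one, mul_smul_comm, mul_one]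
  rw [smul_neg]
  module

lemma hasDerivAt_R {v : ℝ} (hv : 0 < v) (u : ℝ) :
    HasDerivAt (fun u : ℝ => Real.sqrt (u ^ 2 + v ^ 2)) (u / Real.sqrt (u ^ 2 + v ^ 2)) u := by
  have hs : u ^ 2 + v ^ 2 ≠ 0 := by positivity
  have h1 : HasDerivAt (fun u : ℝ => u ^ 2 + v ^ 2) (2 * u) u := by
    simpa using (hasDerivAt_pow 2 u).add_const (v ^ 2)
  have h := (Real.hasDerivAt_sqrt hs).comp u h1
  have hsq : Real.sqrt (u ^ 2 + v ^ 2) ≠ 0 := by positivity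
  refine h.congr_deriv ?_
  field_simp

lemma w_lemmas {v : ℝ} (hv : 0 < v) (u : ℝ) :
    (u / Real.sqrt (u ^ 2 + v ^ 2)) ^ 2 < 1 := by
  have hs : (0:ℝ) < u ^ 2 + v ^ 2 := by positivity
  rw [div_pow, Real.sq_sqrt hs.le, div_lt_one hs]
  nlinarith

lemma sqrt_one_sub_w {v : ℝ} (hv : 0 < v) (u : ℝ) :
    Real.sqrt (1 - (u / Real.sqrt (u ^ 2 + v ^ 2)) ^ 2)
      = v / Real.sqrt (u ^ 2 + v ^ 2) := by
  have hs : (0:ℝ) < u ^ 2 + v ^ 2 := by positivity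
  have hsq : Real.sqrt (u ^ 2 + v ^ 2) ≠ 0 := by positivity
  have : 1 - (u / Real.sqrt (u ^ 2 + v ^ 2)) ^ 2 = v ^ 2 / (u ^ 2 + v ^ 2) := by
    rw [div_pow, Real.sq_sqrt hs.le]; field_simp; ring
  rw [this, Real.sqrt_div (by positivity) _, Real.sqrt_sq hv.le]

lemma hasDerivAt_Thu {v : ℝ} (hv : 0 < v) (u : ℝ) :
    HasDerivAt (fun u : ℝ => Real.arccos (u / Real.sqrt (u ^ 2 + v ^ 2)))
      (-v / (u ^ 2 + v ^ 2)) u := by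
  have hs : (0:ℝ) < u ^ 2 + v ^ 2 := by positivity
  have hsq : Real.sqrt (u ^ 2 + v ^ 2) ≠ 0 := by positivity
  have hw2 := w_lemmas hv u
  have hw1 : u / Real.sqrt (u ^ 2 + v ^ 2) ≠ 1 := by nlinarith
  have hwm1 : u / Real.sqrt (u ^ 2 + v ^ 2) ≠ -1 := by nlinarith
  -- derivative of inner function
  have hinner : HasDerivAt (fun u : ℝ => u / Real.sqrt (u ^ 2 + v ^ 2))
      ((1 * Real.sqrt (u ^ 2 + v ^ 2) - u * (u / Real.sqrt (u ^ 2 + v ^ 2))) /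
        Real.sqrt (u ^ 2 + v ^ 2) ^ 2) u :=
    (hasDerivAt_id u).div (hasDerivAt_R hv u) hsq
  have h := (Real.hasDerivAt_arccos hwm1 hw1).comp u hinner
  refine h.congr_deriv ?_
  rw [sqrt_one_sub_w hv u, Real.sq_sqrt hs.le]
  field_simp
  ring_nf
  linarith [Real.sq_sqrt hs.le]

lemma hasDerivAt_Thv {u : ℝ} (v : ℝ) (hv : 0 < v) :
    HasDerivAt (fun v : ℝ => Real.arccos (u / Real.sqrt (u ^ 2 + v ^ 2)))
      (u / (u ^ 2 + v ^ 2)) v := by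
  have hs : (0:ℝ) < u ^ 2 + v ^ 2 := by positivity
  have hsq : Real.sqrt (u ^ 2 + v ^ 2) ≠ 0 := by positivity
  have hw2 := w_lemmas hv u
  have hw1 : u / Real.sqrt (u ^ 2 + v ^ 2) ≠ 1 := by nlinarith
  have hwm1 : u / Real.sqrt (u ^ 2 + v ^ 2) ≠ -1 := by nlinarith
  have hRv : HasDerivAt (fun v : ℝ => Real.sqrt (u ^ 2 + v ^ 2))
      (v / Real.sqrt (u ^ 2 + v ^ 2)) v := by
    have hs' : u ^ 2 + v ^ 2 ≠ 0 := hs.ne'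
    have h1 : HasDerivAt (fun v : ℝ => u ^ 2 + v ^ 2) (2 * v) v := by
      simpa using ((hasDerivAt_pow 2 v).const_add (u ^ 2))
    have h := (Real.hasDerivAt_sqrt hs').comp v h1
    refine h.congr_deriv ?_
    field_simp
  have hinner : HasDerivAt (fun v : ℝ => u / Real.sqrt (u ^ 2 + v ^ 2))
      ((0 * Real.sqrt (u ^ 2 + v ^ 2) - u * (v / Real.sqrt (u ^ 2 + v ^ 2))) /
        Real.sqrt (u ^ 2 + v ^ 2) ^ 2) v :=
    (hasDerivAt_const v u).div hRv hsq
  have h := (Real.hasDerivAt_arccos hwm1 hw1).comp v hinner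
  refine h.congr_deriv ?_
  rw [sqrt_one_sub_w hv u, Real.sq_sqrt hs.le]
  field_simp
  ring

lemma key_u (I : ℍ[ℝ]) (hI : I ^ 2 = -1) (n : ℤ) (b b' : ℝ → ℍ[ℝ])
    (hb : ∀ r : ℝ, 0 < r → HasDerivAt b (b' r) r) {v : ℝ} (hv : 0 < v) (u : ℝ) :
    HasDerivAt (fun u : ℝ =>
        Ee I ((n : ℝ) * Real.arccos (u / Real.sqrt (u ^ 2 + v ^ 2))) *
          b (Real.sqrt (u ^ 2 + v ^ 2)))
      (((n : ℝ) * (-v / (u ^ 2 + v ^ 2))) •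
          (I * (Ee I ((n : ℝ) * Real.arccos (u / Real.sqrt (u ^ 2 + v ^ 2))) *
            b (Real.sqrt (u ^ 2 + v ^ 2)))) +
        (u / Real.sqrt (u ^ 2 + v ^ 2)) •
          (Ee I ((n : ℝ) * Real.arccos (u / Real.sqrt (u ^ 2 + v ^ 2))) *
            b' (Real.sqrt (u ^ 2 + v ^ 2)))) u := by
  have hR : (0:ℝ) < Real.sqrt (u ^ 2 + v ^ 2) := by positivity
  have hth : HasDerivAt (fun u : ℝ => (n : ℝ) * Real.arccos (u / Real.sqrt (u ^ 2 + v ^ 2)))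
      ((n : ℝ) * (-v / (u ^ 2 + v ^ 2))) u := (hasDerivAt_Thu hv u).const_mul _
  have hE : HasDerivAt (fun u : ℝ =>
      Ee I ((n : ℝ) * Real.arccos (u / Real.sqrt (u ^ 2 + v ^ 2))))
      (((n : ℝ) * (-v / (u ^ 2 + v ^ 2))) •
        (I * Ee I ((n : ℝ) * Real.arccos (u / Real.sqrt (u ^ 2 + v ^ 2))))) u :=
    (hasDerivAt_Ee I hI _).scomp u hth
  have hbR : HasDerivAt (fun u : ℝ => b (Real.sqrt (u ^ 2 + v ^ 2)))
      ((u / Real.sqrt (u ^ 2 + v ^ 2)) • b' (Real.sqrt (u ^ 2 + v ^ 2))) u :=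
    (hb _ hR).scomp u (hasDerivAt_R hv u)
  have h := hE.mul hbR
  refine h.congr_deriv ?_
  simp only [smul_mul_assoc, mul_smul_comm, mul_assoc]

lemma key_v (I : ℍ[ℝ]) (hI : I ^ 2 = -1) (n : ℤ) (b b' : ℝ → ℍ[ℝ])
    (hb : ∀ r : ℝ, 0 < r → HasDerivAt b (b' r) r) (u : ℝ) {v : ℝ} (hv : 0 < v) :
    HasDerivAt (fun v : ℝ =>
        Ee I ((n : ℝ) * Real.arccos (u / Real.sqrt (u ^ 2 + v ^ 2))) *
          b (Real.sqrt (u ^ 2 + v ^ 2)))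
      (((n : ℝ) * (u / (u ^ 2 + v ^ 2))) •
          (I * (Ee I ((n : ℝ) * Real.arccos (u / Real.sqrt (u ^ 2 + v ^ 2))) *
            b (Real.sqrt (u ^ 2 + v ^ 2)))) +
        (v / Real.sqrt (u ^ 2 + v ^ 2)) •
          (Ee I ((n : ℝ) * Real.arccos (u / Real.sqrt (u ^ 2 + v ^ 2))) *
            b' (Real.sqrt (u ^ 2 + v ^ 2)))) v := by
  have hR : (0:ℝ) < Real.sqrt (u ^ 2 + v ^ 2) := by positivity
  have hRv : HasDerivAt (fun v : ℝ => Real.sqrt (u ^ 2 + v ^ 2))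
      (v / Real.sqrt (u ^ 2 + v ^ 2)) v := by
    have hs' : u ^ 2 + v ^ 2 ≠ 0 := by positivity
    have h1 : HasDerivAt (fun v : ℝ => u ^ 2 + v ^ 2) (2 * v) v := by
      simpa using ((hasDerivAt_pow 2 v).const_add (u ^ 2))
    have h := (Real.hasDerivAt_sqrt hs').comp v h1
    refine h.congr_deriv ?_
    field_simp
  have hth : HasDerivAt (fun v : ℝ => (n : ℝ) * Real.arccos (u / Real.sqrt (u ^ 2 + v ^ 2)))
      ((n : ℝ) * (u / (u ^ 2 + v ^ 2))) v := (hasDerivAt_Thv v hv).const_mul _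
  have hE : HasDerivAt (fun v : ℝ =>
      Ee I ((n : ℝ) * Real.arccos (u / Real.sqrt (u ^ 2 + v ^ 2))))
      (((n : ℝ) * (u / (u ^ 2 + v ^ 2))) •
        (I * Ee I ((n : ℝ) * Real.arccos (u / Real.sqrt (u ^ 2 + v ^ 2))))) v :=
    (hasDerivAt_Ee I hI _).scomp v hth
  have hbR : HasDerivAt (fun v : ℝ => b (Real.sqrt (u ^ 2 + v ^ 2)))
      ((v / Real.sqrt (u ^ 2 + v ^ 2)) • b' (Real.sqrt (u ^ 2 + v ^ 2))) v :=
    (hb _ hR).scomp v hRv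
  have h := hE.mul hbR
  refine h.congr_deriv ?_
  simp only [smul_mul_assoc, mul_smul_comm, mul_assoc]

lemma Ee_def (I : ℍ[ℝ]) (t : ℝ) :
    (((Real.cos t : ℝ) : ℍ[ℝ]) + Real.sin t • I) = Ee I t := rfl

set_option maxHeartbeats 2000000 in
/-- For `I ∈ 𝕊`, `n ∈ ℤ` and `a : (0,∞) → ℍ` twice continuously
differentiable, the function `g(x,y) = (cos nθ + I sin nθ)·a(r)` (polar coordinates
`x = r cos θ`, `y = r sin θ`, `r > 0`, `0 < θ < π`) satisfies the stated identity for
the sliced Laplacian acting in the cartesian coordinates `(x,y)`, `y > 0`. -/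
theorem stmt0 (I : ℍ[ℝ]) (hI : I ^ 2 = -1) (n : ℤ) (a : ℝ → ℍ[ℝ])
    (ha : ContDiffOn ℝ 2 a (Set.Ioi 0)) (x y : ℝ) (hy : 0 < y)
    (g : ℝ → ℝ → ℍ[ℝ])
    (hg : ∀ u v : ℝ, 0 < v →
      g u v =
        (((Real.cos ((n : ℝ) * Real.arccos (u / Real.sqrt (u ^ 2 + v ^ 2))) : ℝ) : ℍ[ℝ]) +
            Real.sin ((n : ℝ) * Real.arccos (u / Real.sqrt (u ^ 2 + v ^ 2))) • I) *
          a (Real.sqrt (u ^ 2 + v ^ 2))) :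
    (-(1 / 4 : ℝ)) • (deriv (deriv fun u : ℝ => g u y) x +
        deriv (deriv fun v : ℝ => g x v) y) +
      (1 / 2 : ℝ) • (x • deriv (fun u : ℝ => g u y) x + y • deriv (fun v : ℝ => g x v) y) +
      (1 / 2 : ℝ) • (I * (x • deriv (fun v : ℝ => g x v) y -
        y • deriv (fun u : ℝ => g u y) x)) =
    (-(1 / (4 * Real.sqrt (x ^ 2 + y ^ 2) ^ 2)) : ℝ) •
      ((((Real.cos ((n : ℝ) *
              Real.arccos (x / Real.sqrt (x ^ 2 + y ^ 2))) : ℝ) : ℍ[ℝ]) +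
          Real.sin ((n : ℝ) * Real.arccos (x / Real.sqrt (x ^ 2 + y ^ 2))) • I) *
        ((Real.sqrt (x ^ 2 + y ^ 2) ^ 2) •
            deriv (deriv a) (Real.sqrt (x ^ 2 + y ^ 2)) +
          ((1 - 2 * Real.sqrt (x ^ 2 + y ^ 2) ^ 2) * Real.sqrt (x ^ 2 + y ^ 2)) •
            deriv a (Real.sqrt (x ^ 2 + y ^ 2)) +
          (2 * (n : ℝ) * Real.sqrt (x ^ 2 + y ^ 2) ^ 2 - (n : ℝ) ^ 2) •
            a (Real.sqrt (x ^ 2 + y ^ 2)))) := by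
  -- derivatives of a
  have ha1 : ∀ r : ℝ, 0 < r → HasDerivAt a (deriv a r) r := by
    intro r hr
    exact ((ha.differentiableOn (by norm_num)).differentiableAt
      (Ioi_mem_nhds hr)).hasDerivAt
  have ha2 : ∀ r : ℝ, 0 < r → HasDerivAt (deriv a) (deriv (deriv a) r) r := by
    intro r hr
    have hdw : ContDiffOn ℝ 1 (derivWithin a (Set.Ioi 0)) (Set.Ioi 0) :=
      ha.derivWithin (isOpen_Ioi.uniqueDiffOn) (by norm_num)
    have heq : derivWithin a (Set.Ioi 0) =ᶠ[nhds r] deriv a := by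
      filter_upwards [Ioi_mem_nhds hr] with w hw
      exact derivWithin_of_isOpen isOpen_Ioi hw
    have hd : DifferentiableAt ℝ (derivWithin a (Set.Ioi 0)) r :=
      (hdw.differentiableOn (by norm_num)).differentiableAt (Ioi_mem_nhds hr)
    have hd2 : DifferentiableAt ℝ (deriv a) r := hd.congr_of_eventuallyEq heq.symm
    have := hd2.hasDerivAt
    exact this
  -- u-direction
  have hgy : (fun u : ℝ => g u y) = (fun u : ℝ =>
      Ee I ((n : ℝ) * Real.arccos (u / Real.sqrt (u ^ 2 + y ^ 2))) *
        a (Real.sqrt (u ^ 2 + y ^ 2))) := funext fun u => hg u y hy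
  have hU1fun : deriv (fun u : ℝ => g u y) = (fun u : ℝ =>
      ((n : ℝ) * (-y / (u ^ 2 + y ^ 2))) •
          (I * (Ee I ((n : ℝ) * Real.arccos (u / Real.sqrt (u ^ 2 + y ^ 2))) *
            a (Real.sqrt (u ^ 2 + y ^ 2)))) +
        (u / Real.sqrt (u ^ 2 + y ^ 2)) •
          (Ee I ((n : ℝ) * Real.arccos (u / Real.sqrt (u ^ 2 + y ^ 2))) *
            deriv a (Real.sqrt (u ^ 2 + y ^ 2)))) := by
    funext u
    rw [hgy]
    exact (key_u I hI n a (deriv a) ha1 hy u).deriv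
  have hdenu : HasDerivAt (fun u : ℝ => u ^ 2 + y ^ 2) (2 * x) x := by
    simpa using (hasDerivAt_pow 2 x).add_const (y ^ 2)
  have hsne : (x ^ 2 + y ^ 2 : ℝ) ≠ 0 := by positivity
  have hrne : Real.sqrt (x ^ 2 + y ^ 2) ≠ 0 := by positivity
  have hc1 : HasDerivAt (fun u : ℝ => (n : ℝ) * (-y / (u ^ 2 + y ^ 2)))
      ((n : ℝ) * ((0 * (x ^ 2 + y ^ 2) - -y * (2 * x)) / (x ^ 2 + y ^ 2) ^ 2)) x :=
    ((hasDerivAt_const x (-y)).div hdenu hsne).const_mul _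
  have hf1 := (key_u I hI n a (deriv a) ha1 hy x).const_mul I
  have hc2 : HasDerivAt (fun u : ℝ => u / Real.sqrt (u ^ 2 + y ^ 2))
      ((1 * Real.sqrt (x ^ 2 + y ^ 2) - x * (x / Real.sqrt (x ^ 2 + y ^ 2))) /
        Real.sqrt (x ^ 2 + y ^ 2) ^ 2) x :=
    (hasDerivAt_id x).div (hasDerivAt_R hy x) hrne
  have hf2 := key_u I hI n (deriv a) (deriv (deriv a)) ha2 hy x
  have hD2u : HasDerivAt (fun u : ℝ =>
      ((n : ℝ) * (-y / (u ^ 2 + y ^ 2))) •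
          (I * (Ee I ((n : ℝ) * Real.arccos (u / Real.sqrt (u ^ 2 + y ^ 2))) *
            a (Real.sqrt (u ^ 2 + y ^ 2)))) +
        (u / Real.sqrt (u ^ 2 + y ^ 2)) •
          (Ee I ((n : ℝ) * Real.arccos (u / Real.sqrt (u ^ 2 + y ^ 2))) *
            deriv a (Real.sqrt (u ^ 2 + y ^ 2)))) _ x :=
    (hc1.smul hf1).add (hc2.smul hf2)
  -- v-direction
  have hV1 : ∀ v : ℝ, 0 < v → deriv (fun v : ℝ => g x v) v =
      ((n : ℝ) * (x / (x ^ 2 + v ^ 2))) •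
          (I * (Ee I ((n : ℝ) * Real.arccos (x / Real.sqrt (x ^ 2 + v ^ 2))) *
            a (Real.sqrt (x ^ 2 + v ^ 2)))) +
        (v / Real.sqrt (x ^ 2 + v ^ 2)) •
          (Ee I ((n : ℝ) * Real.arccos (x / Real.sqrt (x ^ 2 + v ^ 2))) *
            deriv a (Real.sqrt (x ^ 2 + v ^ 2))) := by
    intro v hv
    have hev : (fun v : ℝ => g x v) =ᶠ[nhds v] (fun v : ℝ =>
        Ee I ((n : ℝ) * Real.arccos (x / Real.sqrt (x ^ 2 + v ^ 2))) *
          a (Real.sqrt (x ^ 2 + v ^ 2))) := by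
      filter_upwards [Ioi_mem_nhds hv] with w hw
      exact hg x w hw
    rw [hev.deriv_eq]
    exact (key_v I hI n a (deriv a) ha1 x hv).deriv
  have hV1fun : deriv (fun v : ℝ => g x v) =ᶠ[nhds y] (fun v : ℝ =>
      ((n : ℝ) * (x / (x ^ 2 + v ^ 2))) •
          (I * (Ee I ((n : ℝ) * Real.arccos (x / Real.sqrt (x ^ 2 + v ^ 2))) *
            a (Real.sqrt (x ^ 2 + v ^ 2)))) +
        (v / Real.sqrt (x ^ 2 + v ^ 2)) •
          (Ee I ((n : ℝ) * Real.arccos (x / Real.sqrt (x ^ 2 + v ^ 2))) *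
            deriv a (Real.sqrt (x ^ 2 + v ^ 2)))) := by
    filter_upwards [Ioi_mem_nhds hy] with w hw
    exact hV1 w hw
  have hdenv : HasDerivAt (fun v : ℝ => x ^ 2 + v ^ 2) (2 * y) y := by
    simpa using (hasDerivAt_pow 2 y).const_add (x ^ 2)
  have hc3 : HasDerivAt (fun v : ℝ => (n : ℝ) * (x / (x ^ 2 + v ^ 2)))
      ((n : ℝ) * ((0 * (x ^ 2 + y ^ 2) - x * (2 * y)) / (x ^ 2 + y ^ 2) ^ 2)) y :=
    ((hasDerivAt_const y x).div hdenv hsne).const_mul _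
  have hf3 := (key_v I hI n a (deriv a) ha1 x hy).const_mul I
  have hRv : HasDerivAt (fun v : ℝ => Real.sqrt (x ^ 2 + v ^ 2))
      (y / Real.sqrt (x ^ 2 + y ^ 2)) y := by
    have h := (Real.hasDerivAt_sqrt hsne).comp y hdenv
    refine h.congr_deriv ?_
    field_simp
  have hc4 : HasDerivAt (fun v : ℝ => v / Real.sqrt (x ^ 2 + v ^ 2))
      ((1 * Real.sqrt (x ^ 2 + y ^ 2) - y * (y / Real.sqrt (x ^ 2 + y ^ 2))) /
        Real.sqrt (x ^ 2 + y ^ 2) ^ 2) y :=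
    (hasDerivAt_id y).div hRv hrne
  have hf4 := key_v I hI n (deriv a) (deriv (deriv a)) ha2 x hy
  have hD2v : HasDerivAt (fun v : ℝ =>
      ((n : ℝ) * (x / (x ^ 2 + v ^ 2))) •
          (I * (Ee I ((n : ℝ) * Real.arccos (x / Real.sqrt (x ^ 2 + v ^ 2))) *
            a (Real.sqrt (x ^ 2 + v ^ 2)))) +
        (v / Real.sqrt (x ^ 2 + v ^ 2)) •
          (Ee I ((n : ℝ) * Real.arccos (x / Real.sqrt (x ^ 2 + v ^ 2))) *
            deriv a (Real.sqrt (x ^ 2 + v ^ 2)))) _ y :=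
    (hc3.smul hf3).add (hc4.smul hf4)
  rw [hU1fun, hV1fun.deriv_eq, hD2u.deriv, hD2v.deriv, hV1 y hy, Ee_def]
  have hII : ∀ q : ℍ[ℝ], I * (I * q) = -q := fun q => by
    rw [← mul_assoc, ← sq, hI, neg_one_mul]
  simp only [mul_add, mul_sub, mul_smul_comm, smul_add, smul_sub, smul_smul, hII, smul_neg]
  have h2 : Real.sqrt (x ^ 2 + y ^ 2) ^ 2 = (x ^ 2 + y ^ 2) :=
    Real.sq_sqrt (by positivity : (0:ℝ) ≤ x ^ 2 + y ^ 2)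
  have h3 : Real.sqrt (x ^ 2 + y ^ 2) ^ 3 = (x ^ 2 + y ^ 2) * Real.sqrt (x ^ 2 + y ^ 2) := by
    rw [pow_succ, h2]
  have h4 : Real.sqrt (x ^ 2 + y ^ 2) ^ 4 = (x ^ 2 + y ^ 2) ^ 2 := by
    rw [show 4 = 2 * 2 from rfl, pow_mul, h2]
  have h5 : Real.sqrt (x ^ 2 + y ^ 2) ^ 5 = (x ^ 2 + y ^ 2) ^ 2 * Real.sqrt (x ^ 2 + y ^ 2) := by
    rw [pow_succ, h4]
  have h6 : Real.sqrt (x ^ 2 + y ^ 2) ^ 6 = (x ^ 2 + y ^ 2) ^ 3 := by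
    rw [show 6 = 2 * 3 from rfl, pow_mul, h2]
  match_scalars
  all_goals (field_simp; try ring; try (simp only [h2, h3, h4, h5, h6, add_comm (y ^ 2) (x ^ 2)]; ring))
end
end

section
/- For every μ ∈ ℍ and every nonnegative integer n, the series h(t) = ∑_{k=0}^∞ (t^k/k!)·(−μ)_k/(n+1)_k converges absolutely for every t ∈ ℝ, the resulting function h : ℝ → ℍ is twice differentiable, and it satisfies the left confluent hypergeometric equation with right eigenvalue: t·h''(t) + (n+1−t)·h'(t) = −h(t)·μ for all t ∈ ℝ. -/
open MeasureTheory Quaternion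

noncomputable section

/-- quaternionic (left) Pochhammer symbol `(a)_k = a(a+1)⋯(a+k-1)` -/
def pochQ (a : ℍ[ℝ]) (k : ℕ) : ℍ[ℝ] := ((List.range k).map fun i => a + (i : ℍ[ℝ])).prod

lemma pochQ_succ (a : ℍ[ℝ]) (k : ℕ) :
    pochQ a (k + 1) = pochQ a k * (a + (k : ℍ[ℝ])) := by
  simp [pochQ, List.range_succ]

/-- the `k`-th coefficient of the confluent hypergeometric series -/
def coefA (μ : ℍ[ℝ]) (n : ℕ) (k : ℕ) : ℍ[ℝ] :=
  (((Nat.factorial k : ℝ) * ∏ i ∈ Finset.range k, ((n : ℝ) + 1 + i)))⁻¹ • pochQ (-μ) k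

def coefA1 (μ : ℍ[ℝ]) (n : ℕ) (k : ℕ) : ℍ[ℝ] := ((k : ℝ) + 1) • coefA μ n (k + 1)

def coefA2 (μ : ℍ[ℝ]) (n : ℕ) (k : ℕ) : ℍ[ℝ] := ((k : ℝ) + 1) • coefA1 μ n (k + 1)

section Aux

variable {a : ℕ → ℍ[ℝ]} {C x : ℝ}

lemma summable_aux (hC : 0 ≤ C) (hx : 0 ≤ x)
    (hb : ∀ k, ‖a k‖ ≤ C * x ^ k / (Nat.factorial k : ℝ)) (t : ℝ) :
    Summable fun k : ℕ => ‖t ^ k • a k‖ := by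
  apply Summable.of_nonneg_of_le (fun k => norm_nonneg _) (fun k => ?_)
    ((Real.summable_pow_div_factorial (|t| * x)).mul_left C)
  rw [norm_smul, Real.norm_eq_abs, abs_pow]
  calc |t| ^ k * ‖a k‖ ≤ |t| ^ k * (C * x ^ k / (Nat.factorial k : ℝ)) := by
        gcongr
        exact hb k
    _ = C * ((|t| * x) ^ k / (Nat.factorial k : ℝ)) := by rw [mul_pow]; ring

lemma shift_bound (hx : 0 ≤ x)
    (hb : ∀ k, ‖a k‖ ≤ C * x ^ k / (Nat.factorial k : ℝ)) (k : ℕ) :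
    ‖((k : ℝ) + 1) • a (k + 1)‖ ≤ (C * x) * x ^ k / (Nat.factorial k : ℝ) := by
  rw [norm_smul, Real.norm_eq_abs, abs_of_nonneg (by positivity)]
  have hk : ((k : ℝ) + 1) ≠ 0 := by positivity
  have hf : ((Nat.factorial k : ℝ)) ≠ 0 := by positivity
  calc ((k : ℝ) + 1) * ‖a (k + 1)‖
      ≤ ((k : ℝ) + 1) * (C * x ^ (k + 1) / (Nat.factorial (k + 1) : ℝ)) := by
        gcongr
        exact hb (k + 1)
    _ = (C * x) * x ^ k / (Nat.factorial k : ℝ) := by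
        rw [Nat.factorial_succ]
        push_cast
        field_simp
        ring

lemma hasDerivAt_aux (hC : 0 ≤ C) (hx : 0 ≤ x)
    (hb : ∀ k, ‖a k‖ ≤ C * x ^ k / (Nat.factorial k : ℝ)) (t : ℝ) :
    HasDerivAt (fun s : ℝ => ∑' k : ℕ, s ^ k • a k)
      (∑' k : ℕ, t ^ k • (((k : ℝ) + 1) • a (k + 1))) t := by
  set R : ℝ := |t| + 1 with hR
  have hR0 : 0 < R := by positivity
  set u : ℕ → ℝ := fun k => (k : ℝ) * (R ^ (k - 1) * (C * x ^ k / (Nat.factorial k : ℝ)))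
    with hu_def
  have hu1 : ∀ k : ℕ, u (k + 1) = (C * x) * ((R * x) ^ k / (Nat.factorial k : ℝ)) := by
    intro k
    have hk : ((k : ℝ) + 1) ≠ 0 := by positivity
    have hf : ((Nat.factorial k : ℝ)) ≠ 0 := by positivity
    simp only [hu_def, Nat.add_sub_cancel, Nat.factorial_succ]
    push_cast
    rw [mul_pow]
    field_simp
    ring
  have hu : Summable u := by
    rw [← summable_nat_add_iff 1]
    have : (fun k : ℕ => u (k + 1)) =
        fun k : ℕ => (C * x) * ((R * x) ^ k / (Nat.factorial k : ℝ)) := funext hu1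
    rw [this]
    exact (Real.summable_pow_div_factorial (R * x)).mul_left _
  have hbound : ∀ (k : ℕ) (y : ℝ), y ∈ Metric.ball (0 : ℝ) R →
      ‖((k : ℝ) * y ^ (k - 1)) • a k‖ ≤ u k := by
    intro k y hy
    have hyR : |y| ≤ R := by
      rw [Metric.mem_ball, Real.dist_eq, sub_zero] at hy
      exact hy.le
    rw [norm_smul, Real.norm_eq_abs, abs_mul, abs_pow, Nat.abs_cast]
    calc (k : ℝ) * |y| ^ (k - 1) * ‖a k‖
        ≤ (k : ℝ) * R ^ (k - 1) * (C * x ^ k / (Nat.factorial k : ℝ)) := by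
          gcongr <;> first | exact hb k | exact hyR | exact abs_nonneg y | positivity
      _ = u k := by rw [hu_def]; ring
  have hderiv : ∀ (k : ℕ) (y : ℝ),
      HasDerivAt (fun s : ℝ => s ^ k • a k) (((k : ℝ) * y ^ (k - 1)) • a k) y :=
    fun k y => (hasDerivAt_pow k y).smul_const (a k)
  have htmem : t ∈ Metric.ball (0 : ℝ) R := by
    rw [Metric.mem_ball, Real.dist_eq, sub_zero]
    simp [hR]
  have hsum0 : Summable fun k : ℕ => t ^ k • a k :=
    (summable_aux hC hx hb t).of_norm
  have hmain := hasDerivAt_tsum_of_isPreconnected hu Metric.isOpen_ball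
    (convex_ball (0 : ℝ) R).isPreconnected
    (fun k y _ => hderiv k y) hbound htmem hsum0 htmem
  have hsum' : Summable fun k : ℕ => ((k : ℝ) * t ^ (k - 1)) • a k :=
    Summable.of_norm_bounded hu (fun k => hbound k t htmem)
  have heq : (∑' k : ℕ, ((k : ℝ) * t ^ (k - 1)) • a k)
      = ∑' k : ℕ, t ^ k • (((k : ℝ) + 1) • a (k + 1)) := by
    rw [Summable.tsum_eq_zero_add hsum']
    simp only [Nat.cast_zero, zero_mul, zero_smul, zero_add, Nat.add_sub_cancel]
    refine tsum_congr fun k => ?_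
    rw [smul_smul]
    push_cast
    ring_nf
  rw [heq] at hmain
  exact hmain

lemma summableF (hC : 0 ≤ C) (hx : 0 ≤ x)
    (hb : ∀ k, ‖a k‖ ≤ C * x ^ k / (Nat.factorial k : ℝ)) (t : ℝ) :
    Summable fun k : ℕ => t ^ k • ((k : ℝ) • a k) := by
  rw [← summable_nat_add_iff 1]
  have hG : Summable fun k : ℕ => t ^ k • (((k : ℝ) + 1) • a (k + 1)) :=
    (summable_aux (by positivity) hx (shift_bound hx hb) t).of_norm
  have : (fun k : ℕ => t ^ (k + 1) • (((k + 1 : ℕ) : ℝ) • a (k + 1))) =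
      fun k : ℕ => t • (t ^ k • (((k : ℝ) + 1) • a (k + 1))) := by
    funext k
    rw [smul_smul (t) (t ^ k), ← pow_succ']
    push_cast
    rfl
  rw [this]
  exact hG.const_smul t

lemma tsmul_aux (hC : 0 ≤ C) (hx : 0 ≤ x)
    (hb : ∀ k, ‖a k‖ ≤ C * x ^ k / (Nat.factorial k : ℝ)) (t : ℝ) :
    t • ∑' k : ℕ, t ^ k • (((k : ℝ) + 1) • a (k + 1))
      = ∑' k : ℕ, t ^ k • ((k : ℝ) • a k) := by
  have hG : Summable fun k : ℕ => t ^ k • (((k : ℝ) + 1) • a (k + 1)) :=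
    (summable_aux (by positivity) hx (shift_bound hx hb) t).of_norm
  rw [← Summable.tsum_const_smul t hG]
  have hF : Summable fun k : ℕ => t ^ k • ((k : ℝ) • a k) := summableF hC hx hb t
  rw [Summable.tsum_eq_zero_add hF]
  simp only [Nat.cast_zero, zero_smul, smul_zero, zero_add, pow_zero]
  refine tsum_congr fun k => ?_
  rw [smul_smul (t) (t ^ k), ← pow_succ']
  push_cast
  rfl

end Aux

lemma pochQ_norm_le (μ : ℍ[ℝ]) (k : ℕ) :
    ‖pochQ (-μ) k‖ ≤ ∏ i ∈ Finset.range k, (‖μ‖ + (i : ℝ)) := by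
  induction k with
  | zero => simp [pochQ]
  | succ k ih =>
      rw [pochQ_succ, Finset.prod_range_succ, norm_mul]
      have hnk : ‖((k : ℕ) : ℍ[ℝ])‖ = (k : ℝ) := by
        rw [← Quaternion.coe_natCast, Quaternion.norm_coe, Real.norm_eq_abs,
          abs_of_nonneg (Nat.cast_nonneg k)]
      have h1 : ‖(-μ + (k : ℍ[ℝ]))‖ ≤ ‖μ‖ + (k : ℝ) := by
        refine (norm_add_le _ _).trans ?_
        rw [norm_neg, hnk]
      have h2 : (0 : ℝ) ≤ ∏ i ∈ Finset.range k, (‖μ‖ + (i : ℝ)) :=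
        Finset.prod_nonneg fun i _ => by positivity
      exact mul_le_mul ih h1 (norm_nonneg _) h2

lemma coefA_bound (μ : ℍ[ℝ]) (n : ℕ) (k : ℕ) :
    ‖coefA μ n k‖ ≤ 1 * (‖μ‖ + 1) ^ k / (Nat.factorial k : ℝ) := by
  have hP : (0 : ℝ) < ∏ i ∈ Finset.range k, ((n : ℝ) + 1 + i) :=
    Finset.prod_pos fun i _ => by positivity
  have hf : (0 : ℝ) < (Nat.factorial k : ℝ) := by positivity
  have hMP : (∏ i ∈ Finset.range k, (‖μ‖ + (i : ℝ)))
      ≤ (‖μ‖ + 1) ^ k * ∏ i ∈ Finset.range k, ((n : ℝ) + 1 + i) := by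
    have he : (‖μ‖ + 1) ^ k * ∏ i ∈ Finset.range k, ((n : ℝ) + 1 + i)
        = ∏ i ∈ Finset.range k, ((‖μ‖ + 1) * ((n : ℝ) + 1 + i)) := by
      rw [Finset.prod_mul_distrib, Finset.prod_const, Finset.card_range]
    rw [he]
    refine Finset.prod_le_prod (fun i _ => by positivity) (fun i _ => ?_)
    have h1 : (0 : ℝ) ≤ ‖μ‖ := norm_nonneg μ
    have h2 : (0 : ℝ) ≤ (i : ℝ) := Nat.cast_nonneg i
    have h3 : (0 : ℝ) ≤ (n : ℝ) := Nat.cast_nonneg n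
    nlinarith [mul_nonneg h1 h2, mul_nonneg h1 h3]
  calc ‖coefA μ n k‖
      = ((Nat.factorial k : ℝ) * ∏ i ∈ Finset.range k, ((n : ℝ) + 1 + i))⁻¹
          * ‖pochQ (-μ) k‖ := by
        rw [coefA, norm_smul, Real.norm_eq_abs, abs_of_pos (by positivity)]
    _ ≤ ((Nat.factorial k : ℝ) * ∏ i ∈ Finset.range k, ((n : ℝ) + 1 + i))⁻¹
          * ((‖μ‖ + 1) ^ k * ∏ i ∈ Finset.range k, ((n : ℝ) + 1 + i)) := by
        gcongr
        exact (pochQ_norm_le μ k).trans hMP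
    _ = 1 * (‖μ‖ + 1) ^ k / (Nat.factorial k : ℝ) := by
        field_simp

lemma coef_rec (μ : ℍ[ℝ]) (n : ℕ) (k : ℕ) :
    ((k : ℝ) + ((n : ℝ) + 1)) • coefA1 μ n k
      = (k : ℝ) • coefA μ n k - coefA μ n k * μ := by
  have hP : (0 : ℝ) < ∏ i ∈ Finset.range k, ((n : ℝ) + 1 + i) :=
    Finset.prod_pos fun i _ => by positivity
  have hf : (0 : ℝ) < (Nat.factorial k : ℝ) := by positivity
  have hfac : ((Nat.factorial (k + 1) : ℝ)) = ((k : ℝ) + 1) * (Nat.factorial k : ℝ) := by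
    rw [Nat.factorial_succ]; push_cast; ring
  have hPs : (∏ i ∈ Finset.range (k + 1), ((n : ℝ) + 1 + i))
      = (∏ i ∈ Finset.range k, ((n : ℝ) + 1 + i)) * ((n : ℝ) + 1 + k) :=
    Finset.prod_range_succ _ _
  have hmul : pochQ (-μ) k * (-μ + (k : ℍ[ℝ]))
      = (k : ℝ) • pochQ (-μ) k - pochQ (-μ) k * μ := by
    rw [mul_add, mul_neg]
    have : pochQ (-μ) k * ((k : ℕ) : ℍ[ℝ]) = (k : ℝ) • pochQ (-μ) k := by
      rw [show ((k : ℕ) : ℍ[ℝ]) = algebraMap ℝ ℍ[ℝ] ((k : ℕ) : ℝ) from (map_natCast _ k).symm,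
        ← Algebra.commutes, ← Algebra.smul_def]
    rw [this]
    abel
  rw [coefA1, coefA, coefA, pochQ_succ, hfac, hPs, smul_smul, smul_smul]
  have hc : ((k : ℝ) + ((n : ℝ) + 1)) * ((k : ℝ) + 1) *
        (((k : ℝ) + 1) * (Nat.factorial k : ℝ) *
          ((∏ i ∈ Finset.range k, ((n : ℝ) + 1 + i)) * ((n : ℝ) + 1 + k)))⁻¹
      = ((Nat.factorial k : ℝ) * ∏ i ∈ Finset.range k, ((n : ℝ) + 1 + i))⁻¹ := by
    have h1 : ((k : ℝ) + 1) ≠ 0 := by positivity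
    have h2 : ((n : ℝ) + 1 + k) ≠ 0 := by positivity
    field_simp
    ring
  rw [hc, hmul, smul_sub, smul_comm, smul_mul_assoc]

/-- For every `μ ∈ ℍ` and nonnegative integer `n`, the series
`h(t) = ∑ (t^k/k!)·(−μ)_k/(n+1)_k` converges absolutely for every `t ∈ ℝ`, is twice
differentiable, and satisfies `t·h''(t) + (n+1−t)·h'(t) = −h(t)·μ`. -/
theorem stmt1 (μ : ℍ[ℝ]) (n : ℕ) :
    (∀ t : ℝ, Summable fun k : ℕ =>
      ‖((t ^ k / (Nat.factorial k * ∏ i ∈ Finset.range k, ((n : ℝ) + 1 + i))) : ℝ) •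
        pochQ (-μ) k‖) ∧
    (∀ t : ℝ, DifferentiableAt ℝ
      (fun s : ℝ => ∑' k : ℕ,
        ((s ^ k / (Nat.factorial k * ∏ i ∈ Finset.range k, ((n : ℝ) + 1 + i))) : ℝ) •
          pochQ (-μ) k) t) ∧
    (∀ t : ℝ, DifferentiableAt ℝ
      (deriv fun s : ℝ => ∑' k : ℕ,
        ((s ^ k / (Nat.factorial k * ∏ i ∈ Finset.range k, ((n : ℝ) + 1 + i))) : ℝ) •
          pochQ (-μ) k) t) ∧
    (∀ t : ℝ,
      t • deriv (deriv fun s : ℝ => ∑' k : ℕ,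
          ((s ^ k / (Nat.factorial k * ∏ i ∈ Finset.range k, ((n : ℝ) + 1 + i))) : ℝ) •
            pochQ (-μ) k) t +
        ((n : ℝ) + 1 - t) • deriv (fun s : ℝ => ∑' k : ℕ,
          ((s ^ k / (Nat.factorial k * ∏ i ∈ Finset.range k, ((n : ℝ) + 1 + i))) : ℝ) •
            pochQ (-μ) k) t =
      -((∑' k : ℕ,
          ((t ^ k / (Nat.factorial k * ∏ i ∈ Finset.range k, ((n : ℝ) + 1 + i))) : ℝ) •
            pochQ (-μ) k) * μ)) := by
  set x : ℝ := ‖μ‖ + 1 with hxdef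
  have hx : 0 ≤ x := by positivity
  have hb : ∀ k, ‖coefA μ n k‖ ≤ 1 * x ^ k / (Nat.factorial k : ℝ) := coefA_bound μ n
  have hb1 : ∀ k, ‖coefA1 μ n k‖ ≤ (1 * x) * x ^ k / (Nat.factorial k : ℝ) :=
    fun k => shift_bound hx hb k
  have hb2 : ∀ k, ‖coefA2 μ n k‖ ≤ ((1 * x) * x) * x ^ k / (Nat.factorial k : ℝ) :=
    fun k => shift_bound hx hb1 k
  have hterm : ∀ (s : ℝ) (k : ℕ),
      ((s ^ k / (Nat.factorial k * ∏ i ∈ Finset.range k, ((n : ℝ) + 1 + i))) : ℝ) •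
        pochQ (-μ) k = s ^ k • coefA μ n k := by
    intro s k
    rw [coefA, smul_smul, div_eq_mul_inv]
  have hfun : (fun s : ℝ => ∑' k : ℕ,
      ((s ^ k / (Nat.factorial k * ∏ i ∈ Finset.range k, ((n : ℝ) + 1 + i))) : ℝ) •
        pochQ (-μ) k) = fun s : ℝ => ∑' k : ℕ, s ^ k • coefA μ n k := by
    funext s
    exact tsum_congr fun k => hterm s k
  have hA : ∀ t : ℝ, HasDerivAt (fun s : ℝ => ∑' k : ℕ, s ^ k • coefA μ n k)
      (∑' k : ℕ, t ^ k • coefA1 μ n k) t :=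
    fun t => hasDerivAt_aux (by norm_num) hx hb t
  have hderiv1 : deriv (fun s : ℝ => ∑' k : ℕ, s ^ k • coefA μ n k)
      = fun t : ℝ => ∑' k : ℕ, t ^ k • coefA1 μ n k := by
    funext t
    exact (hA t).deriv
  have hA2 : ∀ t : ℝ, HasDerivAt (fun s : ℝ => ∑' k : ℕ, s ^ k • coefA1 μ n k)
      (∑' k : ℕ, t ^ k • coefA2 μ n k) t :=
    fun t => hasDerivAt_aux (by positivity) hx hb1 t
  refine ⟨?_, ?_, ?_, ?_⟩
  · intro t
    simp only [hterm]
    exact summable_aux (by norm_num) hx hb t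
  · intro t
    rw [hfun]
    exact (hA t).differentiableAt
  · intro t
    rw [hfun, hderiv1]
    exact (hA2 t).differentiableAt
  · intro t
    rw [hfun, hderiv1]
    have hD2 : deriv (fun t : ℝ => ∑' k : ℕ, t ^ k • coefA1 μ n k) t
        = ∑' k : ℕ, t ^ k • coefA2 μ n k := (hA2 t).deriv
    rw [hD2]
    have T2 : t • (∑' k : ℕ, t ^ k • coefA2 μ n k)
        = ∑' k : ℕ, t ^ k • ((k : ℝ) • coefA1 μ n k) :=
      tsmul_aux (a := coefA1 μ n) (by positivity) hx hb1 t
    have T1 : t • (∑' k : ℕ, t ^ k • coefA1 μ n k)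
        = ∑' k : ℕ, t ^ k • ((k : ℝ) • coefA μ n k) :=
      tsmul_aux (a := coefA μ n) (by norm_num) hx hb t
    have hS1 : Summable fun k : ℕ => t ^ k • coefA1 μ n k :=
      (summable_aux (by positivity) hx hb1 t).of_norm
    have hSA : Summable fun k : ℕ => t ^ k • ((k : ℝ) • coefA μ n k) :=
      summableF (by norm_num) hx hb t
    have hSA1 : Summable fun k : ℕ => t ^ k • ((k : ℝ) • coefA1 μ n k) :=
      summableF (by positivity) hx hb1 t
    have hSB : Summable fun k : ℕ => ((n : ℝ) + 1) • (t ^ k • coefA1 μ n k) :=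
      hS1.const_smul _
    rw [sub_smul, T2, T1]
    rw [← Summable.tsum_const_smul ((n : ℝ) + 1) hS1]
    rw [← tsum_mul_right, ← tsum_neg]
    rw [← Summable.tsum_sub hSB hSA, ← Summable.tsum_add hSA1 (hSB.sub hSA)]
    refine tsum_congr fun k => ?_
    have key : (k : ℝ) • coefA1 μ n k + (((n : ℝ) + 1) • coefA1 μ n k
        - (k : ℝ) • coefA μ n k) = -(coefA μ n k * μ) := by
      have h := coef_rec μ n k
      have h2 : -(coefA μ n k * μ)
          = ((k : ℝ) + ((n : ℝ) + 1)) • coefA1 μ n k - (k : ℝ) • coefA μ n k := by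
        rw [h]; abel
      rw [h2]
      module
    calc t ^ k • ((k : ℝ) • coefA1 μ n k)
          + (((n : ℝ) + 1) • (t ^ k • coefA1 μ n k) - t ^ k • ((k : ℝ) • coefA μ n k))
        = t ^ k • ((k : ℝ) • coefA1 μ n k + (((n : ℝ) + 1) • coefA1 μ n k
            - (k : ℝ) • coefA μ n k)) := by
          rw [smul_add, smul_sub, smul_comm (t ^ k) ((n : ℝ) + 1)]
      _ = t ^ k • (-(coefA μ n k * μ)) := by rw [key]
      _ = -((t ^ k • coefA μ n k) * μ) := by
          rw [smul_neg, smul_mul_assoc]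
      _ = -(((t ^ k / (Nat.factorial k * ∏ i ∈ Finset.range k, ((n : ℝ) + 1 + i))) : ℝ) •
            pochQ (-μ) k * μ) := by rw [hterm t k]
end
end

section
/- Fix a nonnegative integer m and for a nonnegative integer n set ψ_{m,n}(q) := qⁿ·₁F₁(−m; n+1; |q|²). Then for all nonnegative integers n ≠ k, ∫_{ℍ∖ℝ} conj(ψ_{m,n}(q))·ψ_{m,k}(q)·e^{−|q|²} dλ(q) = 0, where conj denotes quaternionic conjugation. -/
open MeasureTheory Quaternion

noncomputable section

instance : MeasurableSpace ℍ[ℝ] := borel _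
instance : BorelSpace ℍ[ℝ] := ⟨rfl⟩

/-- the surface measure `dσ` of the 2-sphere `𝕊 = {q : q² = -1}` of imaginary units,
realized as the 2-dimensional Hausdorff measure restricted to `𝕊`. -/
def sigmaS : Measure ℍ[ℝ] :=
  (MeasureTheory.Measure.hausdorffMeasure 2).restrict {q : ℍ[ℝ] | q ^ 2 = -1}

/-- the sliced measure `dλ` on `ℍ∖ℝ`: pushforward of `r dr dθ dσ(I)` on
`(0,∞)×(0,2π)×𝕊` under `(r,θ,I) ↦ r(cos θ + I sin θ)`. -/
def slicedMeasure : Measure ℍ[ℝ] :=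
  Measure.map
    (fun p : ℝ × ℝ × ℍ[ℝ] =>
      ((p.1 * Real.cos p.2.1 : ℝ) : ℍ[ℝ]) + (p.1 * Real.sin p.2.1) • p.2.2)
    ((((volume : Measure ℝ).restrict (Set.Ioi 0)).withDensity
        (fun r => ENNReal.ofReal r)).prod
      ((((volume : Measure ℝ)).restrict (Set.Ioo 0 (2 * Real.pi))).prod sigmaS))

/-- truncated confluent hypergeometric `₁F₁(-m; c; t)` -/
def F1 (m : ℕ) (c : ℝ) (t : ℝ) : ℝ :=
  ∑ j ∈ Finset.range (m + 1),
    ((∏ i ∈ Finset.range j, (-(m : ℝ) + i)) /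
        ((∏ i ∈ Finset.range j, (c + i)) * Nat.factorial j)) * t ^ j

-- auxiliary lemmas


lemma imunit {I : ℍ[ℝ]} (h : I ^ 2 = -1) : I.re = 0 ∧ Quaternion.normSq I = 1 := by
  rw [sq, Quaternion.ext_iff] at h
  simp only [Quaternion.re_mul, Quaternion.imI_mul, Quaternion.imJ_mul, Quaternion.imK_mul,
    Quaternion.re_neg, Quaternion.imI_neg, Quaternion.imJ_neg, Quaternion.imK_neg,
    Quaternion.re_one, Quaternion.imI_one, Quaternion.imJ_one, Quaternion.imK_one] at h
  obtain ⟨h1, h2, h3, h4⟩ := h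
  have hre : I.re = 0 := by
    nlinarith [sq_nonneg I.imI, sq_nonneg I.imJ, sq_nonneg I.imK, sq_nonneg I.re]
  refine ⟨hre, ?_⟩
  rw [Quaternion.normSq_def']
  nlinarith [hre]

lemma normq {I : ℍ[ℝ]} (hre : I.re = 0) (hns : Quaternion.normSq I = 1) (r θ : ℝ) :
    ‖(((r * Real.cos θ : ℝ) : ℍ[ℝ]) + (r * Real.sin θ) • I)‖ ^ 2 = r ^ 2 := by
  have h := Quaternion.normSq_eq_norm_mul_self
    (((r * Real.cos θ : ℝ) : ℍ[ℝ]) + (r * Real.sin θ) • I)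
  rw [Quaternion.normSq_def'] at h hns
  simp only [Quaternion.re_add, Quaternion.imI_add, Quaternion.imJ_add, Quaternion.imK_add,
    Quaternion.re_coe, Quaternion.imI_coe, Quaternion.imJ_coe, Quaternion.imK_coe,
    Quaternion.re_smul, Quaternion.imI_smul, Quaternion.imJ_smul, Quaternion.imK_smul,
    smul_eq_mul, hre, mul_zero, add_zero, zero_add] at h
  have hS : I.imI^2 + I.imJ^2 + I.imK^2 = 1 := by rw [hre] at hns; nlinarith [hns]
  have hcs := Real.sin_sq_add_cos_sq θ
  rw [sq (‖_‖), ← h]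
  linear_combination (r * Real.sin θ)^2 * hS + r^2 * hcs

lemma star_liftAux {I : ℍ[ℝ]} (hI : I * I = -1) (hre : I.re = 0) (w : ℂ) :
    star (Complex.liftAux I hI w) = Complex.liftAux I hI ((starRingEnd ℂ) w) := by
  rw [Complex.liftAux_apply, Complex.liftAux_apply]
  have hstarI : star I = -I := by
    ext <;> simp [Quaternion.re_star, Quaternion.imI_star, Quaternion.imJ_star,
      Quaternion.imK_star, hre]
  simp [star_add, Quaternion.star_smul, hstarI, Complex.conj_re, Complex.conj_im]

lemma key (n k : ℕ) (x y r θ : ℝ) {I : ℍ[ℝ]} (hI : I ^ 2 = -1) :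
    Real.exp (-‖(((r * Real.cos θ : ℝ) : ℍ[ℝ]) + (r * Real.sin θ) • I)‖ ^ 2) •
      (star ((((r * Real.cos θ : ℝ) : ℍ[ℝ]) + (r * Real.sin θ) • I) ^ n * ((x : ℝ) : ℍ[ℝ])) *
        (((((r * Real.cos θ : ℝ) : ℍ[ℝ]) + (r * Real.sin θ) • I) ^ k * ((y : ℝ) : ℍ[ℝ])))) =
    (Real.exp (-r ^ 2) * (x * y * r ^ (n + k))) •
      (Real.cos (((k : ℝ) - n) * θ) • (1 : ℍ[ℝ]) + Real.sin (((k : ℝ) - n) * θ) • I) := by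
  obtain ⟨hre, hns⟩ := imunit hI
  have hI' : I * I = -1 := by rw [← sq]; exact hI
  have hnorm := normq hre hns r θ
  set ζ := Complex.liftAux I hI' with hζ
  set z : ℂ := (r : ℂ) * Complex.exp ((θ : ℂ) * Complex.I) with hzdef
  have hq : (((r * Real.cos θ : ℝ) : ℍ[ℝ]) + (r * Real.sin θ) • I) = ζ z := by
    rw [Complex.liftAux_apply]
    have h1 : z.re = r * Real.cos θ := by
      simp [hzdef, Complex.exp_ofReal_mul_I_re]
    have h2 : z.im = r * Real.sin θ := by
      simp [hzdef, Complex.exp_ofReal_mul_I_im]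
    rw [h1, h2, Quaternion.algebraMap_def]
  have hcoe : ∀ t : ℝ, ((t : ℝ) : ℍ[ℝ]) = ζ ((t : ℝ) : ℂ) := by
    intro t
    rw [Complex.liftAux_apply]
    simp [Quaternion.algebraMap_def]
  rw [hnorm, hq, hcoe x, hcoe y, ← map_pow, ← map_pow, ← map_mul, ← map_mul,
    star_liftAux hI' hre, ← map_mul]
  have hconj : (starRingEnd ℂ) z = (r : ℂ) * Complex.exp (-(θ : ℂ) * Complex.I) := by
    rw [hzdef, map_mul, ← Complex.exp_conj, map_mul, Complex.conj_I, Complex.conj_ofReal,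
      Complex.conj_ofReal, mul_neg, neg_mul]
  have hzc : (starRingEnd ℂ) (z ^ n * x) * (z ^ k * y) =
      ((x * y * r ^ (n + k) : ℝ) : ℂ) *
        Complex.exp (((((k : ℝ) - n) * θ : ℝ) : ℂ) * Complex.I) := by
    rw [map_mul, map_pow, Complex.conj_ofReal, hconj]
    have e1 : ((r : ℂ) * Complex.exp (-(θ : ℂ) * Complex.I)) ^ n
        = (r : ℂ) ^ n * Complex.exp ((n : ℂ) * (-(θ : ℂ) * Complex.I)) := by
      rw [mul_pow, Complex.exp_nat_mul]
    have e2 : (z : ℂ) ^ k = (r : ℂ) ^ k * Complex.exp ((k : ℂ) * ((θ : ℂ) * Complex.I)) := by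
      rw [hzdef, mul_pow, Complex.exp_nat_mul]
    rw [e1, e2]
    rw [show (n : ℂ) * (-(θ : ℂ) * Complex.I) = -((n : ℂ) * θ) * Complex.I by ring,
      show (k : ℂ) * ((θ : ℂ) * Complex.I) = ((k : ℂ) * θ) * Complex.I by ring]
    have e3 : Complex.exp (-((n : ℂ) * θ) * Complex.I) * Complex.exp (((k : ℂ) * θ) * Complex.I)
        = Complex.exp (((((k : ℝ) - n) * θ : ℝ) : ℂ) * Complex.I) := by
      rw [← Complex.exp_add]
      congr 1
      push_cast
      ring
    calc (r : ℂ) ^ n * Complex.exp (-(↑n * ↑θ) * Complex.I) * ↑x *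
          ((r : ℂ) ^ k * Complex.exp ((↑k * ↑θ) * Complex.I) * ↑y)
        = ((x * y * r ^ (n + k) : ℝ) : ℂ) *
            (Complex.exp (-(↑n * ↑θ) * Complex.I) * Complex.exp ((↑k * ↑θ) * Complex.I)) := by
          push_cast; ring
      _ = _ := by rw [e3]
  rw [hzc, Complex.liftAux_apply]
  rw [Complex.re_ofReal_mul, Complex.im_ofReal_mul, Complex.exp_ofReal_mul_I_re,
    Complex.exp_ofReal_mul_I_im, Quaternion.algebraMap_def]
  have hc1 : ∀ t : ℝ, ((t : ℝ) : ℍ[ℝ]) = t • (1 : ℍ[ℝ]) := fun t => by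
    rw [← Algebra.algebraMap_eq_smul_one, Quaternion.algebraMap_def]
  rw [hc1]
  match_scalars <;> ring

/- ### finiteness of the sphere measure -/

lemma lip_sin (a b : ℝ) : |Real.sin a - Real.sin b| ≤ |a - b| := by
  rw [Real.sin_sub_sin, abs_mul, abs_mul]
  have h1 : |Real.sin ((a - b) / 2)| ≤ |(a - b) / 2| := Real.abs_sin_le_abs
  have h2 : |Real.cos ((a + b) / 2)| ≤ 1 := Real.abs_cos_le_one _
  have h3 : |(a - b) / 2| = |a - b| / 2 := by rw [abs_div]; norm_num
  have h4 : |(2:ℝ)| = 2 := by norm_num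
  rw [h4]
  nlinarith [abs_nonneg (Real.sin ((a - b) / 2)), abs_nonneg (a - b),
    abs_nonneg (Real.cos ((a + b) / 2))]

lemma lip_cos (a b : ℝ) : |Real.cos a - Real.cos b| ≤ |a - b| := by
  rw [Real.cos_sub_cos, abs_mul, abs_mul]
  have h1 : |Real.sin ((a - b) / 2)| ≤ |(a - b) / 2| := Real.abs_sin_le_abs
  have h2 : |Real.sin ((a + b) / 2)| ≤ 1 := Real.abs_sin_le_one _
  have h3 : |(a - b) / 2| = |a - b| / 2 := by rw [abs_div]; norm_num
  have h4 : |(-2:ℝ)| = 2 := by norm_num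
  rw [h4]
  nlinarith [abs_nonneg (Real.sin ((a - b) / 2)), abs_nonneg (a - b),
    abs_nonneg (Real.sin ((a + b) / 2))]

lemma qnorm_le (q : ℍ[ℝ]) : ‖q‖ ≤ |q.re| + |q.imI| + |q.imJ| + |q.imK| := by
  have h := Quaternion.normSq_eq_norm_mul_self q
  rw [Quaternion.normSq_def'] at h
  nlinarith [norm_nonneg q, abs_nonneg q.re, abs_nonneg q.imI, abs_nonneg q.imJ,
    abs_nonneg q.imK, sq_abs q.re, sq_abs q.imI, sq_abs q.imJ, sq_abs q.imK,
    mul_nonneg (abs_nonneg q.re) (abs_nonneg q.imI),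
    mul_nonneg (abs_nonneg q.re) (abs_nonneg q.imJ),
    mul_nonneg (abs_nonneg q.re) (abs_nonneg q.imK),
    mul_nonneg (abs_nonneg q.imI) (abs_nonneg q.imJ),
    mul_nonneg (abs_nonneg q.imI) (abs_nonneg q.imK),
    mul_nonneg (abs_nonneg q.imJ) (abs_nonneg q.imK)]

def sph (p : Fin 2 → ℝ) : ℍ[ℝ] :=
  ⟨0, Real.cos (p 0), Real.sin (p 0) * Real.cos (p 1), Real.sin (p 0) * Real.sin (p 1)⟩

lemma sph_lipschitz : LipschitzWith 5 sph := by
  apply LipschitzWith.of_dist_le_mul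
  intro p q
  have hd0 : dist (p 0) (q 0) ≤ dist p q := dist_le_pi_dist p q 0
  have hd1 : dist (p 1) (q 1) ≤ dist p q := dist_le_pi_dist p q 1
  rw [dist_eq_norm]
  have hsub : sph p - sph q =
      ⟨0, Real.cos (p 0) - Real.cos (q 0),
        Real.sin (p 0) * Real.cos (p 1) - Real.sin (q 0) * Real.cos (q 1),
        Real.sin (p 0) * Real.sin (p 1) - Real.sin (q 0) * Real.sin (q 1)⟩ := by
    ext <;> simp only [Quaternion.re_sub, Quaternion.imI_sub, Quaternion.imJ_sub,
      Quaternion.imK_sub] <;> simp [sph]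
  rw [hsub]
  refine le_trans (qnorm_le _) ?_
  simp only
  have hcos : |Real.cos (p 0) - Real.cos (q 0)| ≤ dist (p 0) (q 0) := by
    rw [Real.dist_eq]; exact lip_cos _ _
  have hsin : |Real.sin (p 0) - Real.sin (q 0)| ≤ dist (p 0) (q 0) := by
    rw [Real.dist_eq]; exact lip_sin _ _
  have hcos1 : |Real.cos (p 1) - Real.cos (q 1)| ≤ dist (p 1) (q 1) := by
    rw [Real.dist_eq]; exact lip_cos _ _
  have hsin1 : |Real.sin (p 1) - Real.sin (q 1)| ≤ dist (p 1) (q 1) := by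
    rw [Real.dist_eq]; exact lip_sin _ _
  have key : ∀ a b a' b' : ℝ, |a| ≤ 1 → |b'| ≤ 1 →
      |a * b - a' * b'| ≤ |b - b'| + |a - a'| := by
    intro a b a' b' ha hb
    have : a * b - a' * b' = a * (b - b') + (a - a') * b' := by ring
    rw [this]
    refine le_trans (abs_add_le _ _) ?_
    rw [abs_mul, abs_mul]
    nlinarith [abs_nonneg (b - b'), abs_nonneg (a - a'), abs_nonneg a, abs_nonneg b']
  have h2 := key (Real.sin (p 0)) (Real.cos (p 1)) (Real.sin (q 0)) (Real.cos (q 1))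
    (Real.abs_sin_le_one _) (Real.abs_cos_le_one _)
  have h3 := key (Real.sin (p 0)) (Real.sin (p 1)) (Real.sin (q 0)) (Real.sin (q 1))
    (Real.abs_sin_le_one _) (Real.abs_sin_le_one _)
  push_cast
  simp only [abs_zero]
  nlinarith [dist_nonneg (x := p) (y := q)]

lemma sph_surj {I : ℍ[ℝ]} (hre : I.re = 0) (hns : Quaternion.normSq I = 1) :
    I ∈ sph '' (Metric.closedBall (0 : Fin 2 → ℝ) 4) := by
  set b := I.imI
  set c := I.imJ
  set d := I.imK
  have hsum : b ^ 2 + c ^ 2 + d ^ 2 = 1 := by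
    rw [Quaternion.normSq_def', hre] at hns; nlinarith [hns]
  set z : ℂ := ⟨c, d⟩ with hz
  have habs : ‖z‖ = Real.sqrt (c ^ 2 + d ^ 2) := by
    rw [Complex.norm_def, Complex.normSq_mk]; ring_nf
  have hb1 : -1 ≤ b := by nlinarith [sq_nonneg c, sq_nonneg d, sq_nonneg (b+1)]
  have hb2 : b ≤ 1 := by nlinarith [sq_nonneg c, sq_nonneg d, sq_nonneg (b-1)]
  set φ := Real.arccos b
  set θ := Complex.arg z
  have hcosφ : Real.cos φ = b := Real.cos_arccos hb1 hb2
  have hsinφ : Real.sin φ = ‖z‖ := by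
    rw [Real.sin_arccos, habs]
    congr 1
    nlinarith [hsum]
  refine ⟨![φ, θ], ?_, ?_⟩
  · rw [Metric.mem_closedBall, dist_zero_right]
    rw [pi_norm_le_iff_of_nonneg (by norm_num)]
    intro i
    fin_cases i
    · show ‖φ‖ ≤ 4
      rw [Real.norm_eq_abs, abs_of_nonneg (Real.arccos_nonneg b)]
      exact le_trans (Real.arccos_le_pi b) (by linarith [Real.pi_le_four])
    · show ‖θ‖ ≤ 4
      rw [Real.norm_eq_abs]
      exact le_trans (Complex.abs_arg_le_pi z) (by linarith [Real.pi_le_four])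
  · have h0 : (![φ, θ] : Fin 2 → ℝ) 0 = φ := rfl
    have h1 : (![φ, θ] : Fin 2 → ℝ) 1 = θ := rfl
    ext
    · simp [sph, h0, h1, hre]
    · simp [sph, h0, h1, hcosφ]; rfl
    · show Real.sin φ * Real.cos θ = c
      rw [hsinφ]
      exact Complex.norm_mul_cos_arg z
    · show Real.sin φ * Real.sin θ = d
      rw [hsinφ]
      exact Complex.norm_mul_sin_arg z

instance sigmaS_finite : IsFiniteMeasure sigmaS := by
  constructor
  rw [sigmaS, Measure.restrict_apply_univ]
  have hsub : {q : ℍ[ℝ] | q ^ 2 = -1} ⊆ sph '' (Metric.closedBall (0 : Fin 2 → ℝ) 4) := by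
    intro q hq
    obtain ⟨hre, hns⟩ := imunit hq
    exact sph_surj hre hns
  refine lt_of_le_of_lt (measure_mono hsub) ?_
  refine lt_of_le_of_lt (sph_lipschitz.hausdorffMeasure_image_le (by norm_num) _) ?_
  have hpi : (MeasureTheory.Measure.hausdorffMeasure 2 : Measure (Fin 2 → ℝ)) = volume := by
    simpa using MeasureTheory.hausdorffMeasure_pi_real (ι := Fin 2)
  rw [hpi]
  have hball : volume (Metric.closedBall (0 : Fin 2 → ℝ) 4) < ⊤ :=
    (isCompact_closedBall (0 : Fin 2 → ℝ) 4).measure_lt_top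
  exact ENNReal.mul_lt_top (ENNReal.rpow_lt_top_of_nonneg (by norm_num) (by simp)) hball

/- ### trig integrals -/

lemma trig_cos (j : ℤ) (hj : j ≠ 0) :
    ∫ θ in Set.Ioo (0:ℝ) (2 * Real.pi), Real.cos ((j:ℝ) * θ) = 0 := by
  rw [← MeasureTheory.integral_Ioc_eq_integral_Ioo,
    ← intervalIntegral.integral_of_le (by positivity : (0:ℝ) ≤ 2 * Real.pi)]
  have hc : (j : ℝ) ≠ 0 := Int.cast_ne_zero.mpr hj
  rw [intervalIntegral.integral_comp_mul_left Real.cos hc, integral_cos]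
  have h1 : Real.sin ((j:ℝ) * (2 * Real.pi)) = 0 := by
    have : (j:ℝ) * (2 * Real.pi) = ((2 * j : ℤ) : ℝ) * Real.pi := by push_cast; ring
    rw [this, Real.sin_int_mul_pi]
  simp [h1]

lemma trig_sin (j : ℤ) :
    ∫ θ in Set.Ioo (0:ℝ) (2 * Real.pi), Real.sin ((j:ℝ) * θ) = 0 := by
  rcases eq_or_ne j 0 with rfl | hj
  · simp
  rw [← MeasureTheory.integral_Ioc_eq_integral_Ioo,
    ← intervalIntegral.integral_of_le (by positivity : (0:ℝ) ≤ 2 * Real.pi)]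
  have hc : (j : ℝ) ≠ 0 := Int.cast_ne_zero.mpr hj
  rw [intervalIntegral.integral_comp_mul_left Real.sin hc, integral_sin]
  have h1 : Real.cos ((j:ℝ) * (2 * Real.pi)) = 1 := by
    have : (j:ℝ) * (2 * Real.pi) = (j : ℝ) * (2 * Real.pi) := rfl
    rw [show (j:ℝ) * (2 * Real.pi) = (j : ℝ) * (2 * Real.pi) from rfl, Real.cos_int_mul_two_pi]
  simp [h1]


/-- For `ψ_{m,n}(q) = qⁿ·₁F₁(−m; n+1; |q|²)` and `n ≠ k`,
`∫ conj(ψ_{m,n})·ψ_{m,k} e^{−|q|²} dλ = 0`. -/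

theorem stmt3 (m n k : ℕ) (hnk : n ≠ k) :
    ∫ q : ℍ[ℝ],
        Real.exp (-‖q‖ ^ 2) •
          (star (q ^ n * ((F1 m ((n : ℝ) + 1) (‖q‖ ^ 2) : ℝ) : ℍ[ℝ])) *
            (q ^ k * ((F1 m ((k : ℝ) + 1) (‖q‖ ^ 2) : ℝ) : ℍ[ℝ])))
      ∂slicedMeasure = 0 := by
  classical
  set S : Set ℍ[ℝ] := {q : ℍ[ℝ] | q ^ 2 = -1} with hS
  have hSmeas : MeasurableSet S := by
    have : IsClosed S := isClosed_eq (by continuity) continuous_const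
    exact this.measurableSet
  set f : ℍ[ℝ] → ℍ[ℝ] := fun q =>
    Real.exp (-‖q‖ ^ 2) •
      (star (q ^ n * ((F1 m ((n : ℝ) + 1) (‖q‖ ^ 2) : ℝ) : ℍ[ℝ])) *
        (q ^ k * ((F1 m ((k : ℝ) + 1) (‖q‖ ^ 2) : ℝ) : ℍ[ℝ]))) with hf_def
  set Φ : ℝ × ℝ × ℍ[ℝ] → ℍ[ℝ] := fun p =>
    ((p.1 * Real.cos p.2.1 : ℝ) : ℍ[ℝ]) + (p.1 * Real.sin p.2.1) • p.2.2 with hΦ_def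
  set μ1 : Measure ℝ := ((volume : Measure ℝ).restrict (Set.Ioi 0)).withDensity
    (fun r => ENNReal.ofReal r) with hμ1
  set μ2 : Measure ℝ := (volume : Measure ℝ).restrict (Set.Ioo 0 (2 * Real.pi)) with hμ2
  -- continuity
  have hF1 : ∀ c : ℝ, Continuous (F1 m c) := by
    intro c
    unfold F1
    exact continuous_finset_sum _ (fun j _ => by fun_prop)
  have hfc : Continuous f := by
    rw [hf_def]
    apply Continuous.fun_smul
    · fun_prop
    · apply Continuous.mul
      · apply Continuous.comp continuous_star
        exact (continuous_pow n).mul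
          (Quaternion.continuous_coe.comp ((hF1 _).comp ((continuous_norm).pow 2)))
      · exact (continuous_pow k).mul
          (Quaternion.continuous_coe.comp ((hF1 _).comp ((continuous_norm).pow 2)))
  have hΦc : Continuous Φ := by
    rw [hΦ_def]
    apply Continuous.add
    · exact Quaternion.continuous_coe.comp (by fun_prop)
    · exact Continuous.fun_smul (by fun_prop) (continuous_snd.comp continuous_snd)
  -- push the integral to the product space
  rw [slicedMeasure]
  rw [integral_map hΦc.measurable.aemeasurable hfc.aestronglyMeasurable]
  -- a.e. rewriting
  set d : ℝ := (k : ℝ) - n with hd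
  set c : ℝ → ℝ := fun r => Real.exp (-r ^ 2) *
    (F1 m ((n : ℝ) + 1) (r ^ 2) * F1 m ((k : ℝ) + 1) (r ^ 2) * r ^ (n + k)) with hc
  set H : ℝ × ℍ[ℝ] → ℍ[ℝ] := fun x =>
    Real.cos (d * x.1) • (1 : ℍ[ℝ]) + Real.sin (d * x.1) • x.2 with hH
  have hae2 : ∀ᵐ x ∂(μ2.prod sigmaS), x.2 ∈ S := by
    rw [MeasureTheory.ae_iff]
    have : {x : ℝ × ℍ[ℝ] | ¬ x.2 ∈ S} = (Set.univ : Set ℝ) ×ˢ Sᶜ := by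
      ext x; simp [Set.mem_prod]
    rw [this, Measure.prod_prod]
    have hzero : sigmaS Sᶜ = 0 := by
      rw [sigmaS, Measure.restrict_apply hSmeas.compl]
      simp [hS]
    rw [hzero, mul_zero]
  have hae : ∀ᵐ p ∂(μ1.prod (μ2.prod sigmaS)), p.2.2 ∈ S := by
    rw [MeasureTheory.ae_iff]
    have : {p : ℝ × ℝ × ℍ[ℝ] | ¬ p.2.2 ∈ S} =
        (Set.univ : Set ℝ) ×ˢ ((Set.univ : Set ℝ) ×ˢ Sᶜ) := by
      ext p; simp [Set.mem_prod]
    rw [this, Measure.prod_prod, Measure.prod_prod]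
    have hzero : sigmaS Sᶜ = 0 := by
      rw [sigmaS, Measure.restrict_apply hSmeas.compl]
      simp [hS]
    rw [hzero, mul_zero, mul_zero]
  have hcongr : (fun p => f (Φ p)) =ᵐ[μ1.prod (μ2.prod sigmaS)]
      (fun p => c p.1 • H p.2) := by
    filter_upwards [hae] with p hp
    obtain ⟨r, θ, I⟩ := p
    have hI : I ^ 2 = -1 := hp
    obtain ⟨hre, hns⟩ := imunit hI
    have hn := normq hre hns r θ
    have h := key n k (F1 m ((n : ℝ) + 1) (r ^ 2)) (F1 m ((k : ℝ) + 1) (r ^ 2)) r θ hI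
    simp only [hf_def, hΦ_def, hc, hH, hd]
    rw [hn]
    rw [hn] at h
    exact h
  rw [integral_congr_ae hcongr]
  -- Fubini via smul factorization
  have : ∫ p, c p.1 • H p.2 ∂(μ1.prod (μ2.prod sigmaS)) =
      (∫ r, c r ∂μ1) • ∫ x, H x ∂(μ2.prod sigmaS) :=
    integral_prod_smul c H
  rw [this]
  -- the inner integral vanishes
  have hμ2fin : IsFiniteMeasure μ2 := by rw [hμ2]; infer_instance
  have hint1 : Integrable (fun x : ℝ × ℍ[ℝ] => Real.cos (d * x.1) • (1 : ℍ[ℝ]))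
      (μ2.prod sigmaS) := by
    refine (integrable_const (1 : ℝ)).mono' ?_ ?_
    · exact ((Real.continuous_cos.comp (continuous_const.mul continuous_fst)).smul
        continuous_const).aestronglyMeasurable
    · filter_upwards with x
      rw [norm_smul, norm_one, mul_one, Real.norm_eq_abs]
      exact Real.abs_cos_le_one _
  have hint2 : Integrable (fun x : ℝ × ℍ[ℝ] => Real.sin (d * x.1) • x.2)
      (μ2.prod sigmaS) := by
    refine (integrable_const (1 : ℝ)).mono' ?_ ?_
    · exact ((Real.continuous_sin.comp (continuous_const.mul continuous_fst)).smul
        continuous_snd).aestronglyMeasurable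
    · filter_upwards [hae2] with x hx
      rw [norm_smul, Real.norm_eq_abs]
      obtain ⟨hre, hns⟩ := imunit hx
      have h1 : ‖x.2‖ = 1 := by
        have := Quaternion.normSq_eq_norm_mul_self x.2
        rw [hns] at this
        nlinarith [norm_nonneg x.2]
      rw [h1, mul_one]
      exact Real.abs_sin_le_one _
  have hHint : ∫ x, H x ∂(μ2.prod sigmaS) = 0 := by
    rw [hH]
    have hsplit : ∫ x : ℝ × ℍ[ℝ], (Real.cos (d * x.1) • (1 : ℍ[ℝ]) + Real.sin (d * x.1) • x.2)
        ∂(μ2.prod sigmaS) =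
        (∫ x : ℝ × ℍ[ℝ], Real.cos (d * x.1) • (1 : ℍ[ℝ]) ∂(μ2.prod sigmaS)) +
        ∫ x : ℝ × ℍ[ℝ], Real.sin (d * x.1) • x.2 ∂(μ2.prod sigmaS) :=
      integral_add hint1 hint2
    rw [hsplit]
    have e1 : ∫ x : ℝ × ℍ[ℝ], Real.cos (d * x.1) • (1 : ℍ[ℝ]) ∂(μ2.prod sigmaS) =
        (∫ θ, Real.cos (d * θ) ∂μ2) • ∫ _ : ℍ[ℝ], (1 : ℍ[ℝ]) ∂sigmaS :=
      integral_prod_smul (fun θ => Real.cos (d * θ)) (fun _ => (1 : ℍ[ℝ]))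
    have e2 : ∫ x : ℝ × ℍ[ℝ], Real.sin (d * x.1) • x.2 ∂(μ2.prod sigmaS) =
        (∫ θ, Real.sin (d * θ) ∂μ2) • ∫ I, I ∂sigmaS :=
      integral_prod_smul (fun θ => Real.sin (d * θ)) (fun I => I)
    have hdj : d = (((k : ℤ) - n : ℤ) : ℝ) := by rw [hd]; push_cast; ring
    have hj : ((k : ℤ) - n : ℤ) ≠ 0 := by
      intro h
      apply hnk
      omega
    have hc0 : ∫ θ, Real.cos (d * θ) ∂μ2 = 0 := by
      rw [hμ2, hdj]; exact trig_cos _ hj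
    have hs0 : ∫ θ, Real.sin (d * θ) ∂μ2 = 0 := by
      rw [hμ2, hdj]; exact trig_sin _
    rw [e1, e2, hc0, hs0, zero_smul, zero_smul, add_zero]
  rw [hHint, smul_zero]
end
end

section
/- For all nonnegative integers m, n and every q ∈ ℍ: qⁿ·₁F₁(−m; n+1; |q|²) = ((−1)^m·n!/(m+n)!)·H_{m+n,m}(q,q̄). -/
open MeasureTheory Quaternion

noncomputable section

/-- two-argument quaternionic Hermite polynomial `H_{m,n}(a,b)` -/
def qHermite2 (m n : ℕ) (a b : ℍ[ℝ]) : ℍ[ℝ] :=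
  ∑ j ∈ Finset.range (min m n + 1),
    (((-1 : ℝ) ^ j * (Nat.factorial m * Nat.factorial n) /
        (Nat.factorial j * (Nat.factorial (m - j) * Nat.factorial (n - j)))) : ℝ) •
      (a ^ (m - j) * b ^ (n - j))

/-- quaternionic Hermite polynomial `H_{m,n}(q, q̄)` -/
def qHermite (m n : ℕ) (q : ℍ[ℝ]) : ℍ[ℝ] := qHermite2 m n q (star q)

lemma prodA (m : ℕ) : ∀ j ≤ m, (∏ i ∈ Finset.range j, (-(m : ℝ) + i)) =
    (-1)^j * m.factorial / (m - j).factorial := by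
  intro j hj
  induction j with
  | zero =>
      have : ((Nat.factorial m : ℕ) : ℝ) ≠ 0 := by positivity
      simp [div_self this]
  | succ k ih =>
    have hk : k ≤ m := Nat.le_of_succ_le hj
    rw [Finset.prod_range_succ, ih hk]
    set c := m - (k+1) with hc
    have h1 : m - k = c + 1 := by omega
    have h2 : -(m:ℝ) + k = -((c : ℝ) + 1) := by
      have : ((c : ℕ) : ℝ) = (m : ℝ) - (k+1) := by
        rw [hc]; push_cast [Nat.cast_sub hj]; ring
      rw [this]; ring
    rw [h1, Nat.factorial_succ, h2]
    have hne : ((c).factorial : ℝ) ≠ 0 := by positivity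
    have hne2 : ((c : ℝ) + 1) ≠ 0 := by positivity
    push_cast
    field_simp
    ring

lemma prodB (n : ℕ) : ∀ j, (∏ i ∈ Finset.range j, ((n : ℝ) + 1 + i)) =
    (n + j).factorial / n.factorial := by
  intro j
  induction j with
  | zero =>
      have : ((Nat.factorial n : ℕ) : ℝ) ≠ 0 := by positivity
      simp [div_self this]
  | succ k ih =>
    rw [Finset.prod_range_succ, ih]
    have : n + (k+1) = (n + k) + 1 := by omega
    rw [this, Nat.factorial_succ]
    have hne : (n.factorial : ℝ) ≠ 0 := by positivity
    push_cast
    field_simp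
    ring

lemma pow_mul_star_pow (q : ℍ[ℝ]) (a c : ℕ) :
    q ^ (a + c) * (star q) ^ c = ((‖q‖^2)^c : ℝ) • q ^ a := by
  rw [← star_pow, pow_add, mul_assoc, Quaternion.self_mul_star]
  rw [Quaternion.normSq_eq_norm_mul_self, norm_pow]
  rw [Quaternion.mul_coe_eq_smul]
  ring_nf

/-- `qⁿ·₁F₁(−m; n+1; |q|²) = ((−1)^m·n!/(m+n)!)·H_{m+n,m}(q,q̄)`. -/
theorem stmt8 (m n : ℕ) (q : ℍ[ℝ]) :
    q ^ n * ((F1 m ((n : ℝ) + 1) (‖q‖ ^ 2) : ℝ) : ℍ[ℝ]) =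
      (((-1 : ℝ) ^ m * Nat.factorial n / Nat.factorial (m + n)) : ℝ) •
        qHermite (m + n) m q := by
  rw [qHermite, qHermite2, F1]
  have hmin : min (m + n) m = m := min_eq_right (Nat.le_add_right m n)
  rw [hmin, Finset.smul_sum]
  rw [← Finset.sum_range_reflect
    (fun j => (((-1 : ℝ) ^ m * Nat.factorial n / Nat.factorial (m + n)) : ℝ) •
      ((((-1 : ℝ) ^ j * (Nat.factorial (m+n) * Nat.factorial m) /
        (Nat.factorial j * (Nat.factorial (m + n - j) * Nat.factorial (m - j)))) : ℝ) •
      (q ^ (m + n - j) * (star q) ^ (m - j)))) (m+1)]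
  rw [Quaternion.mul_coe_eq_smul, Finset.sum_smul]
  refine Finset.sum_congr rfl (fun j hj => ?_)
  have hjm : j ≤ m := by
    simp only [Finset.mem_range] at hj; omega
  have e1 : m + 1 - 1 - j = m - j := by omega
  have e2 : m + n - (m - j) = n + j := by omega
  have e3 : m - (m - j) = j := by omega
  rw [e1, e2, e3, pow_mul_star_pow, smul_smul, smul_smul]
  congr 1
  rw [prodA m j hjm, prodB n j]
  have h1 : ((m - j).factorial : ℝ) ≠ 0 := by positivity
  have h2 : ((n + j).factorial : ℝ) ≠ 0 := by positivity
  have h3 : ((m + n).factorial : ℝ) ≠ 0 := by positivity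
  have h4 : (j.factorial : ℝ) ≠ 0 := by positivity
  have h5 : (n.factorial : ℝ) ≠ 0 := by positivity
  have hsgn : ((-1 : ℝ))^m * (-1)^(m - j) = (-1)^j := by
    rw [← pow_add]
    have : m + (m - j) = 2 * (m - j) + j := by omega
    rw [this, pow_add, pow_mul]
    norm_num
  field_simp
  ring_nf
  rw [← hsgn]
  ring
end
end

section
/- Let m be a nonnegative integer, q ∈ ℍ, and (C_n)_{n≥0} a sequence of quaternions with S := ∑_{n=0}^∞ n!·|C_n|² < ∞. Then the series ∑_{n=0}^∞ H_{n,m}(q,q̄)·C_n converges absolutely in ℍ and satisfies the pointwise bound |∑_{n=0}^∞ H_{n,m}(q,q̄)·C_n| ≤ e^{|q|²/2}·(m!·S)^{1/2}. -/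
open MeasureTheory Quaternion

noncomputable section

namespace QH

def d (m n j : ℕ) : ℝ := (-1:ℝ)^j * (Nat.factorial j) * (m.choose j) * (n.choose j)

lemma d_zero (m n : ℕ) : d m n 0 = 1 := by simp [d]

lemma d_eq_zero {m n j : ℕ} (h : min m n < j) : d m n j = 0 := by
  rcases min_lt_iff.1 h with h | h <;>
    simp [d, Nat.choose_eq_zero_of_lt h]

lemma qHermite2_eq_sum (m n K : ℕ) (hK : min m n < K) (a b : ℍ[ℝ]) :
    qHermite2 m n a b = ∑ j ∈ Finset.range K, d m n j • (a ^ (m - j) * b ^ (n - j)) := by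
  rw [qHermite2]
  have h1 : ∀ j ∈ Finset.range (min m n + 1),
      (((-1 : ℝ) ^ j * (Nat.factorial m * Nat.factorial n) /
        (Nat.factorial j * (Nat.factorial (m - j) * Nat.factorial (n - j)))) : ℝ) •
      (a ^ (m - j) * b ^ (n - j)) = d m n j • (a ^ (m - j) * b ^ (n - j)) := by
    intro j hj
    simp only [Finset.mem_range, Nat.lt_succ_iff, le_min_iff] at hj
    congr 1
    rw [d, Nat.cast_choose ℝ hj.1, Nat.cast_choose ℝ hj.2]
    have h0 : ∀ k : ℕ, ((Nat.factorial k : ℝ)) ≠ 0 := fun k =>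
      Nat.cast_ne_zero.2 (Nat.factorial_ne_zero k)
    field_simp
  rw [Finset.sum_congr rfl h1]
  apply Finset.sum_subset (Finset.range_subset_range.2 hK)
  intro j _ hj
  rw [d_eq_zero, zero_smul]
  simp only [Finset.mem_range, Nat.lt_succ_iff, not_le] at hj
  exact hj


lemma nat_aux (n j : ℕ) : n * (n-1).choose j = n.choose (j+1) * (j+1) := by
  cases n with
  | zero => simp
  | succ k => simpa using Nat.add_one_mul_choose_eq k j

lemma d_identity (m n j : ℕ) :
    d m n (j+1) - d (m+1) n (j+1) = (n:ℝ) * d m (n-1) j := by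
  have h2 : ((n:ℝ)) * ((n-1).choose j) = (n.choose (j+1)) * (j+1) := by
    exact_mod_cast nat_aux n j
  simp only [d, Nat.choose_succ_succ (m) (j), Nat.factorial_succ, pow_succ]
  push_cast
  simp only [Nat.succ_eq_add_one]
  linear_combination (-(-1:ℝ)^j * (Nat.factorial j) * (m.choose j)) * h2

lemma qHermite2_succ_left (m n : ℕ) (a b : ℍ[ℝ]) :
    qHermite2 (m+1) n a b = a * qHermite2 m n a b - (n:ℝ) • qHermite2 m (n-1) a b := by
  set K := m + n + 1 with hKdef
  have hK1 : min (m+1) n < K + 1 := by omega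
  have hK2 : min m n < K + 1 := by omega
  have hK3 : min m (n-1) < K := by omega
  rw [qHermite2_eq_sum (m+1) n (K+1) hK1 a b, qHermite2_eq_sum m n (K+1) hK2 a b,
    qHermite2_eq_sum m (n-1) K hK3 a b, Finset.mul_sum, Finset.smul_sum]
  have e1 : ∀ j ∈ Finset.range (K+1),
      a * (d m n j • (a ^ (m - j) * b ^ (n - j))) = d m n j • (a ^ (m+1-j) * b ^ (n-j)) := by
    intro j _
    rcases le_or_gt j m with h | h
    · rw [mul_smul_comm, ← mul_assoc, ← pow_succ']
      congr 3
      omega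
    · rcases le_or_gt j n with h' | h'
      · have : min m n < j := by omega
        simp [d_eq_zero this]
      · have : min m n < j := by omega
        simp [d_eq_zero this]
  rw [Finset.sum_congr rfl e1]
  have e2 : ∀ j ∈ Finset.range K,
      (n:ℝ) • (d m (n-1) j • (a ^ (m - j) * b ^ (n - 1 - j)))
        = ((n:ℝ) * d m (n-1) j) • (a ^ (m+1-(j+1)) * b ^ (n-(j+1))) := by
    intro j _
    rw [smul_smul]
    congr 3 <;> omega
  rw [Finset.sum_congr rfl e2]
  have key : (∑ j ∈ Finset.range (K+1), d m n j • (a ^ (m+1-j) * b ^ (n-j)))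
      - (∑ j ∈ Finset.range (K+1), d (m+1) n j • (a ^ (m+1-j) * b ^ (n-j)))
      = ∑ j ∈ Finset.range K, ((n:ℝ) * d m (n-1) j) • (a ^ (m+1-(j+1)) * b ^ (n-(j+1))) := by
    rw [← Finset.sum_sub_distrib]
    have : ∀ j ∈ Finset.range (K+1),
        d m n j • (a ^ (m+1-j) * b ^ (n-j)) - d (m+1) n j • (a ^ (m+1-j) * b ^ (n-j))
        = (d m n j - d (m+1) n j) • (a ^ (m+1-j) * b ^ (n-j)) := by
      intro j _; rw [sub_smul]
    rw [Finset.sum_congr rfl this, Finset.sum_range_succ']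
    simp only [d_zero, sub_self, zero_smul, add_zero]
    exact Finset.sum_congr rfl fun j _ => by rw [d_identity]
  rw [eq_sub_iff_add_eq, ← key]
  abel


lemma qHermite_zero_right (n : ℕ) (q : ℍ[ℝ]) : qHermite n 0 q = q ^ n := by
  have h : (0:ℕ) ⊓ 0 = 0 := rfl
  simp [qHermite, qHermite2, Nat.min_zero, Finset.sum_range_one,
    Nat.factorial_ne_zero, div_self, Nat.cast_ne_zero,
    mul_ne_zero]

lemma star_qHermite (m n : ℕ) (q : ℍ[ℝ]) : star (qHermite m n q) = qHermite n m q := by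
  unfold qHermite qHermite2
  rw [star_sum, Nat.min_comm]
  apply Finset.sum_congr rfl
  intro j _
  rw [Quaternion.star_smul, star_mul, star_pow, star_pow, star_star]
  congr 1
  ring

lemma commute_qHermite (m n : ℕ) (q r : ℍ[ℝ]) (h1 : Commute r q) (h2 : Commute r (star q)) :
    Commute r (qHermite m n q) := by
  unfold qHermite qHermite2
  exact Commute.sum_right _ _ _ fun j _ =>
    ((h1.pow_right _).mul_right (h2.pow_right _)).smul_right _

lemma commute_q_star (q : ℍ[ℝ]) : Commute q (star q) := by
  unfold Commute SemiconjBy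
  rw [Quaternion.self_mul_star, Quaternion.star_mul_self]

lemma commute_q_qHermite (m n : ℕ) (q : ℍ[ℝ]) : Commute q (qHermite m n q) :=
  commute_qHermite m n q q (Commute.refl q) (commute_q_star q)

lemma qHermite_succ_left (m n : ℕ) (q : ℍ[ℝ]) :
    qHermite (m+1) n q = q * qHermite m n q - (n:ℝ) • qHermite m (n-1) q :=
  qHermite2_succ_left m n q (star q)

lemma choose_le_two_pow {m j : ℕ} (h : j ≤ m) : m.choose j ≤ 2 ^ m :=
  le_trans (Finset.single_le_sum (f := fun i => m.choose i) (fun i _ => Nat.zero_le _)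
    (Finset.mem_range.2 (Nat.lt_succ_of_le h))) (le_of_eq (Nat.sum_range_choose m))

lemma abs_d_le (n m j : ℕ) (hn : j ≤ n) (hm : j ≤ m) :
    |d n m j| ≤ ((n+1:ℝ))^m * 2^m := by
  have h1 : |d n m j| = ((Nat.factorial j * (n.choose j) * (m.choose j) : ℕ) : ℝ) := by
    rw [d, abs_mul, abs_mul, abs_mul, abs_pow, abs_neg, abs_one, one_pow, one_mul]
    push_cast
    simp [abs_of_nonneg, Nat.cast_nonneg]
  rw [h1]
  have h2 : Nat.factorial j * (n.choose j) * (m.choose j) ≤ (n+1)^m * 2^m := by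
    have ha : Nat.factorial j * n.choose j = n.descFactorial j :=
      (Nat.descFactorial_eq_factorial_mul_choose n j).symm
    calc Nat.factorial j * (n.choose j) * (m.choose j) ≤ n.descFactorial j * 2^m := by
          rw [ha]; exact Nat.mul_le_mul_left _ (choose_le_two_pow hm)
      _ ≤ (n+1)^m * 2^m := by
          apply Nat.mul_le_mul_right
          calc n.descFactorial j ≤ n ^ j := n.descFactorial_le_pow j
            _ ≤ (n+1)^j := Nat.pow_le_pow_left (Nat.le_succ n) j
            _ ≤ (n+1)^m := Nat.pow_le_pow_right (Nat.succ_le_succ (Nat.zero_le n)) hm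
  calc ((Nat.factorial j * (n.choose j) * (m.choose j) : ℕ) : ℝ)
      ≤ (((n+1)^m * 2^m : ℕ) : ℝ) := by exact_mod_cast h2
    _ = ((n+1:ℝ))^m * 2^m := by push_cast; ring

lemma norm_qHermite_le (n m : ℕ) (q : ℍ[ℝ]) :
    ‖qHermite n m q‖ ≤ ((m+1 : ℝ) * 2^m * (max ‖q‖ 1)^m) * ((n+1:ℝ)^m * (max ‖q‖ 1)^n) := by
  set M := max ‖q‖ 1 with hM
  have hM1 : (1:ℝ) ≤ M := le_max_right _ _
  have hq : ‖q‖ ≤ M := le_max_left _ _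
  have hq0 : (0:ℝ) ≤ ‖q‖ := norm_nonneg q
  have hM0 : (0:ℝ) ≤ M := le_trans zero_le_one hM1
  rw [qHermite, qHermite2_eq_sum n m (min n m + 1) (Nat.lt_succ_self _)]
  refine le_trans (norm_sum_le _ _) ?_
  have hterm : ∀ j ∈ Finset.range (min n m + 1),
      ‖d n m j • (q ^ (n-j) * (star q) ^ (m-j))‖ ≤ ((n+1:ℝ)^m * 2^m) * (M^n * M^m) := by
    intro j hj
    simp only [Finset.mem_range, Nat.lt_succ_iff, le_min_iff] at hj
    rw [norm_smul, norm_mul, norm_pow, norm_pow, norm_star]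
    have h3 : ‖q‖ ^ (n-j) ≤ M ^ n :=
      le_trans (pow_le_pow_left₀ hq0 hq _) (pow_le_pow_right₀ hM1 (Nat.sub_le n j))
    have h4 : ‖q‖ ^ (m-j) ≤ M ^ m :=
      le_trans (pow_le_pow_left₀ hq0 hq _) (pow_le_pow_right₀ hM1 (Nat.sub_le m j))
    exact mul_le_mul (abs_d_le n m j hj.1 hj.2)
      (mul_le_mul h3 h4 (by positivity) (by positivity)) (by positivity) (by positivity)
  refine le_trans (Finset.sum_le_sum hterm) ?_
  rw [Finset.sum_const, Finset.card_range, nsmul_eq_mul]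
  have hcard : ((min n m + 1 : ℕ) : ℝ) ≤ (m+1:ℝ) := by
    have h : min n m + 1 ≤ m + 1 := by omega
    exact_mod_cast h
  calc ((min n m + 1 : ℕ) : ℝ) * (((n+1:ℝ)^m * 2^m) * (M^n * M^m))
      ≤ (m+1:ℝ) * (((n+1:ℝ)^m * 2^m) * (M^n * M^m)) :=
        mul_le_mul_of_nonneg_right hcard (by positivity)
    _ = ((m+1 : ℝ) * 2^m * M^m) * ((n+1:ℝ)^m * M^n) := by ring

lemma summable_of_poly_bound {E : Type*} [NormedAddCommGroup E] [CompleteSpace E]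
    (c y : ℝ) (k : ℕ) (f : ℕ → E) (hy : 0 ≤ y)
    (h : ∀ n, ‖f n‖ ≤ c * (n+1:ℝ)^k * y^n / (Nat.factorial n)) : Summable f := by
  have hc : 0 ≤ c := by
    have := le_trans (norm_nonneg (f 0)) (h 0)
    simpa using this
  apply Summable.of_norm
  refine Summable.of_nonneg_of_le (fun n => norm_nonneg _) (fun n => ?_)
    ((Real.summable_pow_div_factorial (2^k * y)).mul_left c)
  refine le_trans (h n) ?_
  rw [mul_div_assoc]
  have h1 : (n+1:ℝ) ≤ (2:ℝ)^n := by
    have h2 := Nat.lt_two_pow_self (n := n)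
    exact_mod_cast h2
  have hnum : (n+1:ℝ)^k * y^n ≤ (2^k*y)^n := by
    have h2 : (n+1:ℝ)^k ≤ ((2:ℝ)^n)^k := pow_le_pow_left₀ (by positivity) h1 k
    calc (n+1:ℝ)^k * y^n ≤ ((2:ℝ)^n)^k * y^n :=
          mul_le_mul_of_nonneg_right h2 (by positivity)
      _ = (2^k*y)^n := by rw [mul_pow, ← pow_mul, ← pow_mul, Nat.mul_comm]
  have hfac : (0:ℝ) < (Nat.factorial n : ℝ) := Nat.cast_pos.2 (Nat.factorial_pos n)
  calc c * (↑n + 1) ^ k * (y ^ n / ↑(Nat.factorial n))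
      = c * (((↑n + 1) ^ k * y ^ n) / ↑(Nat.factorial n)) := by ring
    _ ≤ c * ((2 ^ k * y) ^ n / ↑(Nat.factorial n)) := by
        apply mul_le_mul_of_nonneg_left _ hc
        gcongr

def T (q : ℍ[ℝ]) (a b n : ℕ) : ℍ[ℝ] :=
  ((Nat.factorial n : ℝ))⁻¹ • (qHermite n a q * qHermite b n q)

lemma norm_prod_le (q : ℍ[ℝ]) (a b : ℕ) : ∃ c : ℝ, 0 ≤ c ∧ ∀ n s : ℕ,
    ‖qHermite n a q * qHermite b (n - s) q‖ ≤ c * (n+1:ℝ)^(a+b) * ((max ‖q‖ 1)^2)^n := by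
  set M := max ‖q‖ 1 with hMdef
  have hM1 : (1:ℝ) ≤ M := le_max_right _ _
  have hM0 : (0:ℝ) ≤ M := le_trans zero_le_one hM1
  refine ⟨((a+1:ℝ) * 2^a * M^a) * ((b+1:ℝ) * 2^b * M^b), by positivity, ?_⟩
  intro n s
  rw [norm_mul]
  have h1 := norm_qHermite_le n a q
  have h2 : ‖qHermite b (n-s) q‖ ≤ ((b+1:ℝ)*2^b*M^b) * ((n+1:ℝ)^b * M^n) := by
    rw [← star_qHermite (n-s) b q, norm_star]
    refine le_trans (norm_qHermite_le (n-s) b q) ?_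
    have h3 : (((n-s:ℕ)):ℝ) + 1 ≤ (n:ℝ)+1 := by
      have : ((n-s:ℕ)) + 1 ≤ n + 1 := by omega
      exact_mod_cast this
    have h4 : M^(n-s) ≤ M^n := pow_le_pow_right₀ hM1 (Nat.sub_le n s)
    apply mul_le_mul_of_nonneg_left _ (by positivity)
    exact mul_le_mul (pow_le_pow_left₀ (by positivity) h3 b) h4 (by positivity) (by positivity)
  calc ‖qHermite n a q‖ * ‖qHermite b (n-s) q‖
      ≤ (((a+1 : ℝ) * 2^a * M^a) * ((n+1:ℝ)^a * M^n)) *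
        (((b+1:ℝ)*2^b*M^b) * ((n+1:ℝ)^b * M^n)) :=
        mul_le_mul h1 h2 (norm_nonneg _) (by positivity)
    _ = (((a+1:ℝ) * 2^a * M^a) * ((b+1:ℝ) * 2^b * M^b)) * (n+1:ℝ)^(a+b) * (M^2)^n := by
        have hMM : (M^2)^n = M^n * M^n := by rw [← pow_mul, two_mul, pow_add]
        rw [pow_add, hMM]
        ring

lemma summable_gen (q : ℍ[ℝ]) (a b s t : ℕ) (e : ℕ → ℝ)
    (he : ∀ n, |e n| ≤ ((n:ℝ)+1) / (Nat.factorial n : ℝ)) :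
    Summable (fun n => e n • (q ^ t * (qHermite n a q * qHermite b (n - s) q))) := by
  obtain ⟨c, hc0, hc⟩ := norm_prod_le q a b
  set M := max ‖q‖ 1 with hMdef
  have hM1 : (1:ℝ) ≤ M := le_max_right _ _
  have hM0 : (0:ℝ) ≤ M := le_trans zero_le_one hM1
  apply summable_of_poly_bound (‖q‖^t * c) (M^2) (a+b+1) _ (by positivity)
  intro n
  rw [norm_smul, norm_mul, norm_pow]
  have hfac : (0:ℝ) < (Nat.factorial n : ℝ) := Nat.cast_pos.2 (Nat.factorial_pos n)
  calc |e n| * (‖q‖^t * ‖qHermite n a q * qHermite b (n-s) q‖)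
      ≤ (((n:ℝ)+1) / (Nat.factorial n : ℝ)) * (‖q‖^t * (c * (n+1:ℝ)^(a+b) * (M^2)^n)) := by
        apply mul_le_mul (he n) _ (by positivity) (by positivity)
        apply mul_le_mul_of_nonneg_left (hc n s) (by positivity)
    _ = ‖q‖^t * c * ((n:ℝ)+1)^(a+b+1) * (M^2)^n / (Nat.factorial n : ℝ) := by
        rw [pow_succ]
        ring

lemma summable_T (q : ℍ[ℝ]) (a b : ℕ) : Summable (T q a b) := by
  have h := summable_gen q a b 0 0 (fun n => ((Nat.factorial n : ℝ))⁻¹) (fun n => by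
    rw [abs_of_nonneg (by positivity), div_eq_mul_inv]
    have hfac : (0:ℝ) < (Nat.factorial n : ℝ) := Nat.cast_pos.2 (Nat.factorial_pos n)
    nlinarith [inv_pos.2 hfac])
  refine h.congr fun n => ?_
  simp [T, Nat.sub_zero, pow_zero, one_mul]

lemma he_inv : ∀ n : ℕ, |((Nat.factorial n : ℝ))⁻¹| ≤ ((n:ℝ)+1) / (Nat.factorial n : ℝ) := by
  intro n
  have hfac : (0:ℝ) < (Nat.factorial n : ℝ) := Nat.cast_pos.2 (Nat.factorial_pos n)
  rw [abs_of_nonneg (by positivity), div_eq_mul_inv]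
  nlinarith [inv_pos.2 hfac]

lemma he_mul : ∀ n : ℕ, |(n:ℝ) * ((Nat.factorial n : ℝ))⁻¹| ≤ ((n:ℝ)+1) / (Nat.factorial n : ℝ) := by
  intro n
  have hfac : (0:ℝ) < (Nat.factorial n : ℝ) := Nat.cast_pos.2 (Nat.factorial_pos n)
  rw [abs_of_nonneg (by positivity), div_eq_mul_inv]
  nlinarith [inv_pos.2 hfac]

lemma T_succ (q : ℍ[ℝ]) (a b : ℕ) :
    ∑' n, T q (a+1) (b+1) n = ((a:ℝ)+1) • ∑' n, T q a b n := by
  classical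
  set U : ℕ → ℍ[ℝ] := fun n =>
    ((Nat.factorial n : ℝ))⁻¹ • (q * (qHermite n (a+1) q * qHermite b n q)) with hUdef
  set V : ℕ → ℍ[ℝ] := fun n =>
    ((n:ℝ) * ((Nat.factorial n : ℝ))⁻¹) • (qHermite n (a+1) q * qHermite b (n-1) q) with hVdef
  have hsumU : Summable U := by
    refine (summable_gen q (a+1) b 0 1 (fun n => ((Nat.factorial n : ℝ))⁻¹) he_inv).congr
      fun n => ?_
    simp [hUdef, pow_one]
  have hsumV : Summable V := by
    refine (summable_gen q (a+1) b 1 0 (fun n => (n:ℝ) * ((Nat.factorial n : ℝ))⁻¹) he_mul).congr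
      fun n => ?_
    simp [hVdef, pow_zero, one_mul]
  have hsumT : Summable (T q a b) := summable_T q a b
  have hTUV : ∀ n, T q (a+1) (b+1) n = U n - V n := by
    intro n
    have hrec : qHermite (b+1) n q = q * qHermite b n q - (n:ℝ) • qHermite b (n-1) q :=
      qHermite_succ_left b n q
    rw [T, hrec, mul_sub, smul_sub, hUdef, hVdef]
    congr 1
    · congr 1
      rw [← mul_assoc, ← (commute_q_qHermite n (a+1) q).eq, mul_assoc]
    · rw [mul_smul_comm, smul_smul, mul_comm]
  have hV0 : V 0 = 0 := by simp [hVdef]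
  have hVsucc : ∀ k, V (k+1) = U k - ((a:ℝ)+1) • T q a b k := by
    intro k
    have hfk : (0:ℝ) < (Nat.factorial k : ℝ) := Nat.cast_pos.2 (Nat.factorial_pos k)
    have h1 : (((k:ℕ)+1:ℕ):ℝ) * ((Nat.factorial (k+1) : ℝ))⁻¹ = ((Nat.factorial k : ℝ))⁻¹ := by
      rw [Nat.factorial_succ]
      push_cast
      rw [mul_inv]
      rw [← mul_assoc, mul_inv_cancel₀ (by positivity), one_mul]
    have hrec : qHermite (k+1) (a+1) q
        = q * qHermite k (a+1) q - ((a:ℝ)+1) • qHermite k a q := by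
      have h := qHermite_succ_left k (a+1) q
      simpa using h
    show (((k+1:ℕ):ℝ) * ((Nat.factorial (k+1) : ℝ))⁻¹) •
        (qHermite (k+1) (a+1) q * qHermite b ((k+1)-1) q) = _
    rw [Nat.add_sub_cancel, h1, hrec, sub_mul, smul_sub]
    congr 1
    · rw [hUdef, mul_assoc]
    · rw [smul_mul_assoc, smul_smul, mul_comm, ← smul_smul]
      rfl
  have hVs : ∑' n, V n = (∑' n, U n) - ((a:ℝ)+1) • ∑' n, T q a b n := by
    rw [Summable.tsum_eq_zero_add hsumV, hV0, zero_add]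
    calc ∑' k, V (k+1) = ∑' k, (U k - ((a:ℝ)+1) • T q a b k) := tsum_congr hVsucc
      _ = (∑' k, U k) - ∑' k, ((a:ℝ)+1) • T q a b k :=
          Summable.tsum_sub hsumU (hsumT.const_smul _)
      _ = (∑' k, U k) - ((a:ℝ)+1) • ∑' k, T q a b k := by rw [Summable.tsum_const_smul ((a:ℝ)+1) hsumT]
  calc ∑' n, T q (a+1) (b+1) n = ∑' n, (U n - V n) := tsum_congr hTUV
    _ = (∑' n, U n) - ∑' n, V n := Summable.tsum_sub hsumU hsumV
    _ = ((a:ℝ)+1) • ∑' n, T q a b n := by rw [hVs]; abel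

lemma qHermite_zero_left (n : ℕ) (q : ℍ[ℝ]) : qHermite 0 n q = (star q) ^ n := by
  rw [← star_qHermite n 0 q, qHermite_zero_right, star_pow]

lemma T_zero (q : ℍ[ℝ]) : ∑' n, T q 0 0 n = (((Real.exp (‖q‖^2)) : ℝ) : ℍ[ℝ]) := by
  have hcoe : ∀ n : ℕ, T q 0 0 n = ((((‖q‖^2)^n / (Nat.factorial n : ℝ)) : ℝ) : ℍ[ℝ]) := by
    intro n
    rw [T, qHermite_zero_right, qHermite_zero_left]
    rw [← (commute_q_star q).mul_pow]
    rw [Quaternion.self_mul_star]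
    have h2 : Quaternion.normSq q = ‖q‖^2 := by
      rw [Quaternion.normSq_eq_norm_mul_self, sq]
    rw [h2, ← Quaternion.coe_pow, Quaternion.smul_coe, inv_mul_eq_div]
  rw [tsum_congr hcoe]
  have hsum : Summable (fun n => ((‖q‖^2)^n / (Nat.factorial n : ℝ))) :=
    Real.summable_pow_div_factorial _
  have hmap := (algebraMapCLM ℝ ℍ[ℝ]).map_tsum hsum
  have hcoe2 : ∀ y : ℝ, algebraMapCLM ℝ ℍ[ℝ] y = (y : ℍ[ℝ]) := fun y => by
    rw [coe_algebraMapCLM]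
    exact congrFun (QuaternionAlgebra.coe_algebraMap) y
  calc ∑' n, ((((‖q‖^2)^n / (Nat.factorial n : ℝ)) : ℝ) : ℍ[ℝ])
      = ∑' n, algebraMapCLM ℝ ℍ[ℝ] ((‖q‖^2)^n / (Nat.factorial n : ℝ)) := by
        exact tsum_congr fun n => (hcoe2 _).symm
    _ = algebraMapCLM ℝ ℍ[ℝ] (∑' n, (‖q‖^2)^n / (Nat.factorial n : ℝ)) := hmap.symm
    _ = (((Real.exp (‖q‖^2)) : ℝ) : ℍ[ℝ]) := by
        rw [hcoe2]
        congr 1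
        rw [Real.exp_eq_exp_ℝ, NormedSpace.exp_eq_tsum_div]

lemma T_diag (q : ℍ[ℝ]) (m n : ℕ) :
    T q m m n = (((‖qHermite n m q‖^2 / (Nat.factorial n : ℝ)) : ℝ) : ℍ[ℝ]) := by
  rw [T, ← star_qHermite n m q, Quaternion.self_mul_star]
  have h2 : Quaternion.normSq (qHermite n m q) = ‖qHermite n m q‖^2 := by
    rw [Quaternion.normSq_eq_norm_mul_self, sq]
  rw [h2, Quaternion.smul_coe, inv_mul_eq_div]

lemma sum_T_diag (q : ℍ[ℝ]) (m : ℕ) :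
    ∑' n, T q m m n = ((((Nat.factorial m : ℝ) * Real.exp (‖q‖^2)) : ℝ) : ℍ[ℝ]) := by
  induction m with
  | zero => simpa using T_zero q
  | succ k ih =>
      rw [T_succ q k k, ih, Quaternion.smul_coe]
      congr 1
      rw [Nat.factorial_succ]
      push_cast
      ring

lemma summable_sq (q : ℍ[ℝ]) (m : ℕ) :
    Summable (fun n => ‖qHermite n m q‖^2 / (Nat.factorial n : ℝ)) := by
  obtain ⟨c, hc0, hc⟩ := norm_prod_le q m m
  apply summable_of_poly_bound c ((max ‖q‖ 1)^2) (m+m) _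
    (by positivity)
  intro n
  have hfac : (0:ℝ) < (Nat.factorial n : ℝ) := Nat.cast_pos.2 (Nat.factorial_pos n)
  have h1 : ‖qHermite n m q‖^2 = ‖qHermite n m q * qHermite m (n - 0) q‖ := by
    rw [Nat.sub_zero, ← star_qHermite n m q, norm_mul, norm_star, sq]
  rw [Real.norm_eq_abs, abs_of_nonneg (by positivity), h1]
  gcongr
  exact hc n 0

lemma sum_sq_eq (q : ℍ[ℝ]) (m : ℕ) :
    ∑' n, ‖qHermite n m q‖^2 / (Nat.factorial n : ℝ)
      = (Nat.factorial m : ℝ) * Real.exp (‖q‖^2) := by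
  apply Quaternion.coe_injective (R := ℝ)
  have hcoe2 : ∀ y : ℝ, algebraMapCLM ℝ ℍ[ℝ] y = (y : ℍ[ℝ]) := fun y => by
    rw [coe_algebraMapCLM]
    exact congrFun (QuaternionAlgebra.coe_algebraMap) y
  calc ((∑' n, ‖qHermite n m q‖^2 / (Nat.factorial n : ℝ) : ℝ) : ℍ[ℝ])
      = algebraMapCLM ℝ ℍ[ℝ] (∑' n, ‖qHermite n m q‖^2 / (Nat.factorial n : ℝ)) :=
        (hcoe2 _).symm
    _ = ∑' n, algebraMapCLM ℝ ℍ[ℝ] (‖qHermite n m q‖^2 / (Nat.factorial n : ℝ)) :=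
        (algebraMapCLM ℝ ℍ[ℝ]).map_tsum (summable_sq q m)
    _ = ∑' n, T q m m n := tsum_congr fun n => by rw [hcoe2, T_diag]
    _ = ((((Nat.factorial m : ℝ) * Real.exp (‖q‖^2)) : ℝ) : ℍ[ℝ]) := sum_T_diag q m

lemma tsum_cs (f g : ℕ → ℝ) (hf0 : ∀ n, 0 ≤ f n) (hg0 : ∀ n, 0 ≤ g n)
    (hf : Summable (fun n => f n ^ 2)) (hg : Summable (fun n => g n ^ 2)) :
    Summable (fun n => f n * g n) ∧
    ∑' n, f n * g n ≤ Real.sqrt (∑' n, f n ^ 2) * Real.sqrt (∑' n, g n ^ 2) := by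
  have hfg : Summable (fun n => f n * g n) := by
    refine Summable.of_nonneg_of_le (fun n => mul_nonneg (hf0 n) (hg0 n))
      (fun n => ?_) ((hf.add hg).div_const 2)
    nlinarith [sq_nonneg (f n - g n)]
  refine ⟨hfg, ?_⟩
  apply Summable.tsum_le_of_sum_le hfg
  intro s
  have h1 : (∑ i ∈ s, f i * g i)^2 ≤ (∑ i ∈ s, f i ^2) * (∑ i ∈ s, g i ^2) :=
    Finset.sum_mul_sq_le_sq_mul_sq s f g
  have h2 : ∑ i ∈ s, f i^2 ≤ ∑' n, f n^2 := Summable.sum_le_tsum s (fun i _ => sq_nonneg _) hf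
  have h3 : ∑ i ∈ s, g i^2 ≤ ∑' n, g n^2 := Summable.sum_le_tsum s (fun i _ => sq_nonneg _) hg
  have h4 : (0:ℝ) ≤ ∑ i ∈ s, f i * g i :=
    Finset.sum_nonneg fun i _ => mul_nonneg (hf0 i) (hg0 i)
  have h5 : (0:ℝ) ≤ ∑ i ∈ s, g i ^ 2 := Finset.sum_nonneg fun i _ => sq_nonneg _
  have h6 : (0:ℝ) ≤ ∑' n, f n ^ 2 := tsum_nonneg fun n => sq_nonneg _
  calc ∑ i ∈ s, f i * g i = Real.sqrt ((∑ i ∈ s, f i * g i)^2) := (Real.sqrt_sq h4).symm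
    _ ≤ Real.sqrt ((∑' n, f n^2) * (∑' n, g n^2)) := by
        apply Real.sqrt_le_sqrt
        refine le_trans h1 ?_
        exact mul_le_mul h2 h3 h5 h6
    _ = Real.sqrt (∑' n, f n ^ 2) * Real.sqrt (∑' n, g n ^ 2) := Real.sqrt_mul h6 _

end QH

open QH in
/-- If `S = ∑ n!·|C_n|² < ∞` then `∑ H_{n,m}(q,q̄)·C_n` converges
absolutely and `|∑ H_{n,m}(q,q̄)·C_n| ≤ e^{|q|²/2}·(m!·S)^{1/2}`. -/
theorem stmt10 (m : ℕ) (q : ℍ[ℝ]) (C : ℕ → ℍ[ℝ])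
    (hS : Summable fun n : ℕ => (Nat.factorial n : ℝ) * ‖C n‖ ^ 2) :
    Summable (fun n : ℕ => ‖qHermite n m q * C n‖) ∧
      ‖∑' n : ℕ, qHermite n m q * C n‖ ≤
        Real.exp (‖q‖ ^ 2 / 2) *
          Real.sqrt (Nat.factorial m * ∑' n : ℕ, (Nat.factorial n : ℝ) * ‖C n‖ ^ 2) := by
  have hsq := summable_sq q m
  have hseq := sum_sq_eq q m
  set f : ℕ → ℝ := fun n => ‖qHermite n m q‖ / Real.sqrt (Nat.factorial n) with hfdef
  set g : ℕ → ℝ := fun n => Real.sqrt (Nat.factorial n) * ‖C n‖ with hgdef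
  have hfacpos : ∀ n : ℕ, (0:ℝ) < Real.sqrt (Nat.factorial n) := fun n =>
    Real.sqrt_pos.2 (Nat.cast_pos.2 (Nat.factorial_pos n))
  have hf2 : ∀ n, f n ^ 2 = ‖qHermite n m q‖^2 / (Nat.factorial n : ℝ) := by
    intro n
    rw [hfdef, div_pow, Real.sq_sqrt (Nat.cast_nonneg _)]
  have hg2 : ∀ n, g n ^ 2 = (Nat.factorial n : ℝ) * ‖C n‖^2 := by
    intro n
    rw [hgdef, mul_pow, Real.sq_sqrt (Nat.cast_nonneg _)]
  have hfg : ∀ n, f n * g n = ‖qHermite n m q * C n‖ := by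
    intro n
    rw [norm_mul, hfdef, hgdef]
    field_simp
  have hf0 : ∀ n, 0 ≤ f n := fun n => div_nonneg (norm_nonneg _) (hfacpos n).le
  have hg0 : ∀ n, 0 ≤ g n := fun n => mul_nonneg (hfacpos n).le (norm_nonneg _)
  have hsf : Summable (fun n => f n ^ 2) := hsq.congr fun n => (hf2 n).symm
  have hsg : Summable (fun n => g n ^ 2) := hS.congr fun n => (hg2 n).symm
  obtain ⟨hsum, hle⟩ := tsum_cs f g hf0 hg0 hsf hsg
  have hsum' : Summable (fun n : ℕ => ‖qHermite n m q * C n‖) := hsum.congr hfg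
  refine ⟨hsum', ?_⟩
  have hS0 : (0:ℝ) ≤ ∑' n, (Nat.factorial n : ℝ) * ‖C n‖ ^ 2 :=
    tsum_nonneg fun n => mul_nonneg (Nat.cast_nonneg _) (sq_nonneg _)
  have hE : Real.sqrt (Real.exp (‖q‖^2)) = Real.exp (‖q‖^2/2) := by
    have hee : Real.exp (‖q‖^2/2) * Real.exp (‖q‖^2/2) = Real.exp (‖q‖^2) := by
      rw [← Real.exp_add]
      congr 1
      ring
    rw [← hee, Real.sqrt_mul_self (Real.exp_pos _).le]
  calc ‖∑' n : ℕ, qHermite n m q * C n‖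
      ≤ ∑' n, ‖qHermite n m q * C n‖ := norm_tsum_le_tsum_norm hsum'
    _ = ∑' n, f n * g n := tsum_congr fun n => (hfg n).symm
    _ ≤ Real.sqrt (∑' n, f n ^ 2) * Real.sqrt (∑' n, g n ^ 2) := hle
    _ = Real.sqrt ((Nat.factorial m : ℝ) * Real.exp (‖q‖^2)) *
          Real.sqrt (∑' n, (Nat.factorial n : ℝ) * ‖C n‖ ^ 2) := by
        rw [show (∑' n, f n ^ 2) = (Nat.factorial m : ℝ) * Real.exp (‖q‖^2) from
            (tsum_congr hf2).trans hseq,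
          show (∑' n, g n ^ 2) = ∑' n, (Nat.factorial n : ℝ) * ‖C n‖ ^ 2 from
            tsum_congr hg2]
    _ = Real.exp (‖q‖ ^ 2 / 2) *
          Real.sqrt (Nat.factorial m * ∑' n : ℕ, (Nat.factorial n : ℝ) * ‖C n‖ ^ 2) := by
        rw [Real.sqrt_mul (Nat.cast_nonneg _), Real.sqrt_mul (Nat.cast_nonneg _), hE]
        ring
end
end

section
/- For every nonnegative integer m and all complex numbers z, w, the series ∑_{n=0}^∞ H_{m,n}(z,z̄)·H_{n,m}(w,w̄)/n! converges absolutely and equals m!·e^{z̄ w}·L_m(|z−w|²). (This is the closed form of the reproducing kernel K_m(q,q') = (1/(π m!))·∑_{n≥0} H_{n,m}(q,q̄)·conj(H_{n,m}(q',q̄'))/n! of the generalized quaternionic Bargmann space of level m, for q, q' lying in a common slice of ℍ.) -/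
noncomputable section

/-- complex Hermite polynomial `H_{m,n}(z, z̄)` -/
def cHermite (m n : ℕ) (z : ℂ) : ℂ :=
  ∑ j ∈ Finset.range (min m n + 1),
    (((-1 : ℝ) ^ j * (Nat.factorial m * Nat.factorial n) /
        (Nat.factorial j * (Nat.factorial (m - j) * Nat.factorial (n - j))) : ℝ) : ℂ) *
      (z ^ (m - j) * (starRingEnd ℂ z) ^ (n - j))

/-- Laguerre polynomial `L_m(t) = ∑_{j=0}^m (−1)^j (m choose j) t^j/j!` -/
def laguerre (m : ℕ) (t : ℝ) : ℝ :=
  ∑ j ∈ Finset.range (m + 1),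
    (-1 : ℝ) ^ j * (Nat.choose m j) * t ^ j / Nat.factorial j

open Finset

/-! ### Auxiliary lemmas -/

lemma coeff_cast {m n j : ℕ} (hm : j ≤ m) (hn : j ≤ n) :
    (((-1 : ℝ) ^ j * (Nat.factorial m * Nat.factorial n) /
        (Nat.factorial j * (Nat.factorial (m - j) * Nat.factorial (n - j))) : ℝ) : ℂ)
    = (-1 : ℂ) ^ j * ((m.choose j * n.descFactorial j : ℕ) : ℂ) := by
  have h1 : (m.choose j * j.factorial * (m - j).factorial : ℕ) = m.factorial :=
    Nat.choose_mul_factorial_mul_factorial hm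
  have h2 : ((n - j).factorial * n.descFactorial j : ℕ) = n.factorial :=
    Nat.factorial_mul_descFactorial hn
  have key : ((-1 : ℝ) ^ j * (Nat.factorial m * Nat.factorial n) /
        (Nat.factorial j * (Nat.factorial (m - j) * Nat.factorial (n - j))) : ℝ)
      = (-1 : ℝ) ^ j * ((m.choose j * n.descFactorial j : ℕ) : ℝ) := by
    rw [div_eq_iff (by positivity)]
    rw [← h1, ← h2]
    push_cast
    ring
  rw [key]
  push_cast
  ring

lemma cHermite_eq (m n : ℕ) (z : ℂ) :
    cHermite m n z = ∑ j ∈ Finset.range (m + 1),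
      if j ≤ n then (-1 : ℂ) ^ j * ((m.choose j * n.descFactorial j : ℕ) : ℂ) *
        (z ^ (m - j) * (starRingEnd ℂ z) ^ (n - j)) else 0 := by
  rw [cHermite]
  rw [← Finset.sum_subset (Finset.range_subset_range.2 (by omega : min m n + 1 ≤ m + 1))
    (fun x hx hx' => by
      rw [if_neg]
      simp only [mem_range] at hx hx'
      omega)]
  refine Finset.sum_congr rfl fun j hj => ?_
  simp only [mem_range] at hj
  rw [if_pos (by omega), coeff_cast (by omega) (by omega), mul_assoc]

lemma cHermite_conj (m n : ℕ) (w : ℂ) :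
    (starRingEnd ℂ) (cHermite m n w) = cHermite n m w := by
  rw [cHermite, cHermite, map_sum, min_comm n m]
  refine Finset.sum_congr rfl fun j hj => ?_
  simp only [map_mul, map_pow, Complex.conj_conj, Complex.conj_ofReal]
  rw [mul_comm (Nat.factorial m : ℝ) (Nat.factorial n : ℝ),
    mul_comm ((Nat.factorial (m - j) : ℝ)) ((Nat.factorial (n - j) : ℝ))]
  ring

/-! ### The Vandermonde-type combinatorial identity -/

lemma natN {j k n : ℕ} (hj : j ≤ n) (hk : k ≤ n) :
    ∑ i ∈ range (min j k + 1), j.choose i * k.descFactorial i * n.descFactorial (j + k - i)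
      = n.descFactorial j * n.descFactorial k := by
  have ext1 : ∑ i ∈ range (min j k + 1), j.choose i * k.descFactorial i * n.descFactorial (j + k - i)
      = ∑ i ∈ range (k + 1), j.choose i * k.descFactorial i * n.descFactorial (j + k - i) :=
    Finset.sum_subset (Finset.range_subset_range.2 (by omega)) (fun x hx hx' => by
      simp only [mem_range] at hx hx'
      rw [Nat.choose_eq_zero_of_lt (by omega), Nat.zero_mul, Nat.zero_mul])
  rw [ext1]
  have per : ∀ i ∈ range (k + 1), j.choose i * k.descFactorial i * n.descFactorial (j + k - i)
      = n.descFactorial j * (k.factorial * (j.choose i * (n - j).choose (k - i))) := by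
    intro i hi
    simp only [mem_range] at hi
    have hik : i ≤ k := by omega
    have h3 : (n - j).descFactorial (k - i) * n.descFactorial j = n.descFactorial (j + k - i) := by
      have h := Nat.descFactorial_mul_descFactorial (k := j) (m := j + k - i) (n := n)
        (by omega)
      rwa [show j + k - i - j = k - i by omega] at h
    rw [← h3, Nat.descFactorial_eq_factorial_mul_choose k i,
      Nat.descFactorial_eq_factorial_mul_choose (n - j) (k - i),
      ← Nat.choose_mul_factorial_mul_factorial hik]
    ring
  rw [Finset.sum_congr rfl per, ← Finset.mul_sum, ← Finset.mul_sum]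
  congr 1
  rw [Nat.descFactorial_eq_factorial_mul_choose]
  congr 1
  have h := Nat.add_choose_eq j (n - j) k
  rw [show j + (n - j) = n by omega] at h
  rw [h, Finset.Nat.sum_antidiagonal_eq_sum_range_succ_mk]

/-! ### The inner series -/

def hterm (j k : ℕ) (u w : ℂ) (n : ℕ) : ℂ :=
  if j ≤ n ∧ k ≤ n then
    ((n.descFactorial j * n.descFactorial k : ℕ) : ℂ) / (n.factorial : ℂ) *
      (u ^ (n - j) * w ^ (n - k))
  else 0

lemma per_n (j k n : ℕ) (u w : ℂ) :
    ∑ i ∈ range (min j k + 1),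
      (if j + k - i ≤ n then
        ((j.choose i * k.descFactorial i : ℕ) : ℂ) * (u ^ (k - i) * w ^ (j - i)) *
          ((u * w) ^ (n - (j + k - i)) / ((n - (j + k - i)).factorial : ℂ))
      else 0)
      = hterm j k u w n := by
  by_cases hn : j ≤ n ∧ k ≤ n
  · obtain ⟨hj, hk⟩ := hn
    rw [hterm, if_pos ⟨hj, hk⟩]
    have per : ∀ i ∈ range (min j k + 1),
        (if j + k - i ≤ n then
          ((j.choose i * k.descFactorial i : ℕ) : ℂ) * (u ^ (k - i) * w ^ (j - i)) *
            ((u * w) ^ (n - (j + k - i)) / ((n - (j + k - i)).factorial : ℂ))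
        else 0)
        = ((j.choose i * k.descFactorial i * n.descFactorial (j + k - i) : ℕ) : ℂ) /
            (n.factorial : ℂ) * (u ^ (n - j) * w ^ (n - k)) := by
      intro i hi
      simp only [mem_range] at hi
      have hik : i ≤ k := by omega
      have hij : i ≤ j := by omega
      by_cases hg : j + k - i ≤ n
      · rw [if_pos hg]
        have hfac : (((n - (j + k - i)).factorial * n.descFactorial (j + k - i) : ℕ) : ℂ)
            = (n.factorial : ℂ) := by
          exact_mod_cast congrArg (Nat.cast : ℕ → ℂ) (Nat.factorial_mul_descFactorial hg)
        have e1 : n - j = (k - i) + (n - (j + k - i)) := by omega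
        have e2 : n - k = (j - i) + (n - (j + k - i)) := by omega
        rw [e1, e2, pow_add, pow_add, ← hfac, mul_pow]
        push_cast
        have h1 : ((n - (j + k - i)).factorial : ℂ) ≠ 0 := by
          exact_mod_cast (Nat.factorial_ne_zero _)
        have h2 : ((n.descFactorial (j + k - i) : ℂ)) ≠ 0 := by
          have : n.descFactorial (j + k - i) ≠ 0 := by
            simp [Nat.descFactorial_eq_zero_iff_lt]; omega
          exact_mod_cast this
        field_simp
      · rw [if_neg hg]
        have hz : n.descFactorial (j + k - i) = 0 :=
          Nat.descFactorial_eq_zero_iff_lt.2 (by omega)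
        simp [hz]
    rw [Finset.sum_congr rfl per]
    rw [← Finset.sum_mul, ← Finset.sum_div, ← Nat.cast_sum, natN hj hk]
  · rw [hterm, if_neg hn]
    refine Finset.sum_eq_zero fun i hi => ?_
    simp only [mem_range] at hi
    rw [if_neg (by omega)]

lemma summable_exp_div (x : ℂ) : Summable fun q : ℕ => x ^ q / (q.factorial : ℂ) :=
  NormedSpace.expSeries_div_summable x

lemma psi_summable (c : ℕ) (C : ℂ) (x : ℂ) :
    Summable (fun n : ℕ => if c ≤ n then C * (x ^ (n - c) / ((n - c).factorial : ℂ)) else 0) := by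
  have hinj : Function.Injective (fun q : ℕ => q + c) := fun a b h => by simpa using h
  have hsupp : Function.support
      (fun n : ℕ => if c ≤ n then C * (x ^ (n - c) / ((n - c).factorial : ℂ)) else 0)
      ⊆ Set.range (fun q : ℕ => q + c) := by
    intro n hn
    simp only [Function.mem_support] at hn
    by_cases h : c ≤ n
    · exact ⟨n - c, by simpa using Nat.sub_add_cancel h⟩
    · simp [h] at hn
  rw [← Function.Injective.summable_iff hinj (by
    intro x hx
    by_contra h
    exact hx (hsupp (by simpa using h)))]
  refine (Summable.congr ((summable_exp_div x).mul_left C) fun q => ?_)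
  show C * (x ^ q / (q.factorial : ℂ))
      = if c ≤ q + c then C * (x ^ (q + c - c) / ((q + c - c).factorial : ℂ)) else 0
  rw [if_pos (Nat.le_add_left c q), Nat.add_sub_cancel]

lemma psi_tsum (c : ℕ) (C : ℂ) (x : ℂ) :
    ∑' n : ℕ, (if c ≤ n then C * (x ^ (n - c) / ((n - c).factorial : ℂ)) else 0)
      = C * ∑' q : ℕ, x ^ q / (q.factorial : ℂ) := by
  have hinj : Function.Injective (fun q : ℕ => q + c) := fun a b h => by simpa using h
  rw [← tsum_mul_left]
  refine (Function.Injective.tsum_eq hinj ?_).symm.trans (tsum_congr fun q => ?_)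
  · intro n hn
    simp only [Function.mem_support] at hn
    by_cases h : c ≤ n
    · exact ⟨n - c, by simpa using Nat.sub_add_cancel h⟩
    · simp [h] at hn
  · show (if c ≤ q + c then C * (x ^ (q + c - c) / ((q + c - c).factorial : ℂ)) else 0)
        = C * (x ^ q / (q.factorial : ℂ))
    rw [if_pos (Nat.le_add_left c q), Nat.add_sub_cancel]

lemma inner_tsum (j k : ℕ) (u w : ℂ) :
    ∑' n : ℕ, hterm j k u w n = Complex.exp (u * w) *
      ∑ i ∈ range (min j k + 1),
        ((j.choose i * k.descFactorial i : ℕ) : ℂ) * (u ^ (k - i) * w ^ (j - i)) := by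
  have hexp : Complex.exp (u * w) = ∑' q : ℕ, (u * w) ^ q / (q.factorial : ℂ) := by
    rw [Complex.exp_eq_exp_ℂ, NormedSpace.exp_eq_tsum_div]
  symm
  calc Complex.exp (u * w) * ∑ i ∈ range (min j k + 1),
        ((j.choose i * k.descFactorial i : ℕ) : ℂ) * (u ^ (k - i) * w ^ (j - i))
      = ∑ i ∈ range (min j k + 1),
        ∑' n : ℕ, (if j + k - i ≤ n then
          (((j.choose i * k.descFactorial i : ℕ) : ℂ) * (u ^ (k - i) * w ^ (j - i))) *
            ((u * w) ^ (n - (j + k - i)) / ((n - (j + k - i)).factorial : ℂ)) else 0) := by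
        rw [Finset.mul_sum]
        refine Finset.sum_congr rfl fun i _ => ?_
        rw [psi_tsum (j + k - i) _ (u * w), ← hexp]
        ring
    _ = ∑' n : ℕ, ∑ i ∈ range (min j k + 1),
        (if j + k - i ≤ n then
          (((j.choose i * k.descFactorial i : ℕ) : ℂ) * (u ^ (k - i) * w ^ (j - i))) *
            ((u * w) ^ (n - (j + k - i)) / ((n - (j + k - i)).factorial : ℂ)) else 0) :=
        (Summable.tsum_finsetSum (fun i _ => psi_summable (j + k - i) _ (u * w))).symm
    _ = ∑' n : ℕ, hterm j k u w n := tsum_congr fun n => per_n j k n u w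

/-! ### Summability bounds -/

lemma hterm_norm_le (j k : ℕ) (u w : ℂ) (n : ℕ) :
    ‖hterm j k u w n‖ ≤ (2 ^ (j + k) * (max 1 ‖u‖) * (max 1 ‖w‖)) ^ n / n.factorial := by
  have hden : (0:ℝ) < (n.factorial : ℝ) := by exact_mod_cast n.factorial_pos
  rw [hterm]
  split_ifs with h
  · rw [norm_mul, norm_div, norm_mul, norm_pow, norm_pow, RCLike.norm_natCast,
      RCLike.norm_natCast]
    rw [div_mul_eq_mul_div]
    rw [div_le_div_iff₀ hden hden]
    refine mul_le_mul_of_nonneg_right ?_ (le_of_lt hden)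
    have h1 : ((n.descFactorial j * n.descFactorial k : ℕ) : ℝ) ≤ ((2 : ℝ) ^ (j + k)) ^ n := by
      have hn : n.descFactorial j * n.descFactorial k ≤ (2 ^ (j + k)) ^ n := by
        calc n.descFactorial j * n.descFactorial k ≤ n ^ j * n ^ k :=
              Nat.mul_le_mul (n.descFactorial_le_pow j) (n.descFactorial_le_pow k)
          _ = n ^ (j + k) := (pow_add n j k).symm
          _ ≤ (2 ^ n) ^ (j + k) := Nat.pow_le_pow_left (Nat.le_of_lt (Nat.lt_two_pow_self (n := n))) _
          _ = (2 ^ (j + k)) ^ n := by rw [← pow_mul, ← pow_mul, Nat.mul_comm]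
      calc ((n.descFactorial j * n.descFactorial k : ℕ) : ℝ) ≤ (((2 ^ (j + k)) ^ n : ℕ) : ℝ) := by
            exact_mod_cast hn
        _ = ((2 : ℝ) ^ (j + k)) ^ n := by push_cast; ring
    have h2 : ‖u‖ ^ (n - j) ≤ (max 1 ‖u‖) ^ n :=
      (pow_le_pow_left₀ (norm_nonneg u) (le_max_right 1 ‖u‖) (n - j)).trans
        (pow_le_pow_right₀ (le_max_left 1 ‖u‖) (Nat.sub_le n j))
    have h3 : ‖w‖ ^ (n - k) ≤ (max 1 ‖w‖) ^ n :=
      (pow_le_pow_left₀ (norm_nonneg w) (le_max_right 1 ‖w‖) (n - k)).trans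
        (pow_le_pow_right₀ (le_max_left 1 ‖w‖) (Nat.sub_le n k))
    calc ((n.descFactorial j * n.descFactorial k : ℕ) : ℝ) * (‖u‖ ^ (n - j) * ‖w‖ ^ (n - k))
        ≤ ((2 : ℝ) ^ (j + k)) ^ n * ((max 1 ‖u‖) ^ n * (max 1 ‖w‖) ^ n) := by
          refine mul_le_mul h1 (mul_le_mul h2 h3 (by positivity) (by positivity))
            (by positivity) (by positivity)
      _ = (2 ^ (j + k) * (max 1 ‖u‖) * (max 1 ‖w‖)) ^ n := by
          rw [mul_pow, mul_pow]; ring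
  · simp only [norm_zero]
    positivity

lemma summable_hterm_norm (j k : ℕ) (u w : ℂ) : Summable fun n => ‖hterm j k u w n‖ :=
  Summable.of_nonneg_of_le (fun _ => norm_nonneg _) (hterm_norm_le j k u w)
    (Real.summable_pow_div_factorial _)

/-! ### The finite reindexing identity -/

lemma neg_one_pow_congr' {a b : ℕ} (h : a % 2 = b % 2) : (-1 : ℂ) ^ a = (-1) ^ b := by
  conv_lhs => rw [← Nat.div_add_mod a 2]
  conv_rhs => rw [← Nat.div_add_mod b 2]
  rw [pow_add, pow_add, pow_mul, pow_mul, h]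
  norm_num

set_option maxHeartbeats 2000000 in
lemma coeff_bij {m j k i : ℕ} (hj : j ≤ m) (hk : k ≤ m) (hij : i ≤ j) (hik : i ≤ k) :
    (m.factorial : ℂ) * (m.choose (m - i) : ℂ) / ((m - i).factorial : ℂ) *
      ((m - i).choose (m - j) : ℂ) * ((m - i).choose (k - i) : ℂ)
    = (m.choose j : ℂ) * (m.choose k : ℂ) * (j.choose i : ℂ) * (k.descFactorial i : ℂ) := by
  have fne : ∀ n : ℕ, ((n.factorial : ℂ)) ≠ 0 := fun n =>
    Nat.cast_ne_zero.2 (Nat.factorial_ne_zero n)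
  have c1 : (m.choose (m - i) : ℂ) = m.factorial / ((m - i).factorial * i.factorial) := by
    rw [Nat.cast_choose ℂ (Nat.sub_le m i), show m - (m - i) = i by omega]
  have c2 : ((m - i).choose (m - j) : ℂ)
      = (m - i).factorial / ((m - j).factorial * (j - i).factorial) := by
    rw [Nat.cast_choose ℂ (show m - j ≤ m - i by omega), show m - i - (m - j) = j - i by omega]
  have c3 : ((m - i).choose (k - i) : ℂ)
      = (m - i).factorial / ((k - i).factorial * (m - k).factorial) := by
    rw [Nat.cast_choose ℂ (show k - i ≤ m - i by omega), show m - i - (k - i) = m - k by omega]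
  have c4 : (m.choose j : ℂ) = m.factorial / (j.factorial * (m - j).factorial) :=
    Nat.cast_choose ℂ hj
  have c5 : (m.choose k : ℂ) = m.factorial / (k.factorial * (m - k).factorial) :=
    Nat.cast_choose ℂ hk
  have c6 : (j.choose i : ℂ) = j.factorial / (i.factorial * (j - i).factorial) :=
    Nat.cast_choose ℂ hij
  have c7 : (k.descFactorial i : ℂ) = k.factorial / (k - i).factorial := by
    rw [eq_div_iff (fne _)]
    exact_mod_cast congrArg (Nat.cast : ℕ → ℂ)
      (by rw [Nat.mul_comm]; exact Nat.factorial_mul_descFactorial hik)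
  rw [c1, c2, c3, c4, c5, c6, c7]
  simp only [div_mul_div_comm, mul_div_assoc', div_div, div_mul_eq_mul_div]
  rw [div_eq_div_iff (by simp [Nat.factorial_ne_zero]) (by simp [Nat.factorial_ne_zero])]
  ring

def Fterm (m : ℕ) (z u w v : ℂ) (p : ℕ × ℕ × ℕ) : ℂ :=
  (-1 : ℂ) ^ (p.1 + p.2.1) * ((m.choose p.1 * m.choose p.2.1 : ℕ) : ℂ) *
    (z ^ (m - p.1) * v ^ (m - p.2.1)) *
    (((p.1.choose p.2.2 * Nat.descFactorial p.2.1 p.2.2 : ℕ) : ℂ) *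
      (u ^ (p.2.1 - p.2.2) * w ^ (p.1 - p.2.2)))

def Gterm (m : ℕ) (z u w v : ℂ) (p : ℕ × ℕ × ℕ) : ℂ :=
  ((m.factorial : ℂ) * ((-1 : ℂ) ^ p.1 * (m.choose p.1 : ℂ) / (p.1.factorial : ℂ))) *
    ((z ^ p.2.1 * (-w) ^ (p.1 - p.2.1) * (p.1.choose p.2.1 : ℂ)) *
      (u ^ p.2.2 * (-v) ^ (p.1 - p.2.2) * (p.1.choose p.2.2 : ℂ)))

set_option maxHeartbeats 2000000 in
lemma star_id (m : ℕ) (z u w v : ℂ) :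
    ∑ j ∈ range (m + 1), ∑ k ∈ range (m + 1),
      ((-1 : ℂ) ^ (j + k) * ((m.choose j * m.choose k : ℕ) : ℂ) *
          (z ^ (m - j) * v ^ (m - k)) *
        ∑ i ∈ range (min j k + 1),
          ((j.choose i * k.descFactorial i : ℕ) : ℂ) * (u ^ (k - i) * w ^ (j - i)))
      = (m.factorial : ℂ) * ∑ r ∈ range (m + 1),
          (-1 : ℂ) ^ r * (m.choose r : ℂ) * ((z - w) * (u - v)) ^ r / (r.factorial : ℂ) := by
  classical
  set cube : Finset (ℕ × ℕ × ℕ) := range (m + 1) ×ˢ (range (m + 1) ×ˢ range (m + 1)) with hcube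
  have step1 : ∑ j ∈ range (m + 1), ∑ k ∈ range (m + 1),
      ((-1 : ℂ) ^ (j + k) * ((m.choose j * m.choose k : ℕ) : ℂ) *
          (z ^ (m - j) * v ^ (m - k)) *
        ∑ i ∈ range (min j k + 1),
          ((j.choose i * k.descFactorial i : ℕ) : ℂ) * (u ^ (k - i) * w ^ (j - i)))
      = ∑ p ∈ cube, Fterm m z u w v p := by
    rw [hcube, Finset.sum_product]
    refine Finset.sum_congr rfl fun j hj => ?_
    rw [Finset.sum_product]
    refine Finset.sum_congr rfl fun k hk => ?_
    simp only [mem_range] at hj hk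
    rw [Finset.mul_sum]
    refine Finset.sum_subset (Finset.range_subset_range.2 (by omega)) fun i hi hi' => ?_
    simp only [mem_range] at hi hi'
    have h0 : j.choose i * k.descFactorial i = 0 := by
      rcases Nat.lt_or_ge j i with h | h
      · rw [Nat.choose_eq_zero_of_lt h, Nat.zero_mul]
      · rw [Nat.descFactorial_eq_zero_iff_lt.2 (by omega), Nat.mul_zero]
    simp [Fterm, h0]
  have step5 : ∑ p ∈ cube, Gterm m z u w v p
      = (m.factorial : ℂ) * ∑ r ∈ range (m + 1),
          (-1 : ℂ) ^ r * (m.choose r : ℂ) * ((z - w) * (u - v)) ^ r / (r.factorial : ℂ) := by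
    rw [hcube, Finset.sum_product, Finset.mul_sum]
    refine Finset.sum_congr rfl fun r hr => ?_
    simp only [mem_range] at hr
    have e1 : ∑ α ∈ range (m + 1), z ^ α * (-w) ^ (r - α) * (r.choose α : ℂ) = (z - w) ^ r := by
      rw [← Finset.sum_subset (Finset.range_subset_range.2 (by omega : r + 1 ≤ m + 1))
        (fun x hx hx' => by
          simp only [mem_range] at hx hx'
          rw [Nat.choose_eq_zero_of_lt (by omega)]
          simp), ← add_pow, sub_eq_add_neg]
    have e2 : ∑ β ∈ range (m + 1), u ^ β * (-v) ^ (r - β) * (r.choose β : ℂ) = (u - v) ^ r := by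
      rw [← Finset.sum_subset (Finset.range_subset_range.2 (by omega : r + 1 ≤ m + 1))
        (fun x hx hx' => by
          simp only [mem_range] at hx hx'
          rw [Nat.choose_eq_zero_of_lt (by omega)]
          simp), ← add_pow, sub_eq_add_neg]
    calc ∑ p ∈ range (m + 1) ×ˢ range (m + 1), Gterm m z u w v (r, p)
        = ((m.factorial : ℂ) * ((-1 : ℂ) ^ r * (m.choose r : ℂ) / (r.factorial : ℂ))) *
          ((∑ α ∈ range (m + 1), z ^ α * (-w) ^ (r - α) * (r.choose α : ℂ)) *
            (∑ β ∈ range (m + 1), u ^ β * (-v) ^ (r - β) * (r.choose β : ℂ))) := by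
          rw [Finset.sum_mul_sum, Finset.mul_sum, Finset.sum_product]
          refine Finset.sum_congr rfl fun α _ => ?_
          rw [Finset.mul_sum]
          refine Finset.sum_congr rfl fun β _ => ?_
          first
          | rfl
          | (simp only [Gterm]; ring)
        _ = (m.factorial : ℂ) *
            ((-1 : ℂ) ^ r * (m.choose r : ℂ) * ((z - w) * (u - v)) ^ r / (r.factorial : ℂ)) := by
          rw [e1, e2, mul_pow]
          ring
  rw [step1, ← step5]
  rw [← Finset.sum_filter_of_ne (p := fun p : ℕ × ℕ × ℕ => p.2.2 ≤ p.1 ∧ p.2.2 ≤ p.2.1)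
    (fun p hp hne => by
      by_contra hc
      apply hne
      have h0 : p.1.choose p.2.2 * Nat.descFactorial p.2.1 p.2.2 = 0 := by
        rcases Nat.lt_or_ge p.1 p.2.2 with h | h
        · rw [Nat.choose_eq_zero_of_lt h, Nat.zero_mul]
        · rw [Nat.descFactorial_eq_zero_iff_lt.2 (by omega), Nat.mul_zero]
      simp [Fterm, h0])]
  rw [← Finset.sum_filter_of_ne (p := fun p : ℕ × ℕ × ℕ => p.2.1 ≤ p.1 ∧ p.2.2 ≤ p.1)
    (s := cube) (f := Gterm m z u w v)
    (fun p hp hne => by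
      by_contra hc
      apply hne
      rcases Nat.lt_or_ge p.1 p.2.1 with h | h
      · rw [Gterm, Nat.choose_eq_zero_of_lt h]
        simp
      · rw [Gterm, Nat.choose_eq_zero_of_lt (show p.1 < p.2.2 by omega)]
        simp)]
  refine Finset.sum_nbij' (fun p => (m - p.2.2, m - p.1, p.2.1 - p.2.2))
    (fun p => (m - p.2.1, p.2.2 + (m - p.1), m - p.1)) ?_ ?_ ?_ ?_ ?_
  · intro p hp
    simp only [hcube, Finset.mem_filter, Finset.mem_product, Finset.mem_range] at hp ⊢
    omega
  · intro p hp
    simp only [hcube, Finset.mem_filter, Finset.mem_product, Finset.mem_range] at hp ⊢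
    omega
  · intro p hp
    simp only [hcube, Finset.mem_filter, Finset.mem_product, Finset.mem_range] at hp
    simp only [Prod.ext_iff]
    omega
  · intro p hp
    simp only [hcube, Finset.mem_filter, Finset.mem_product, Finset.mem_range] at hp
    simp only [Prod.ext_iff]
    omega
  · intro p hp
    simp only [hcube, Finset.mem_filter, Finset.mem_product, Finset.mem_range] at hp
    obtain ⟨⟨hj, hk, hi⟩, hij, hik⟩ := hp
    obtain ⟨j, k, i⟩ := p
    simp only at hj hk hi hij hik
    have hj' : j ≤ m := by omega
    have hk' : k ≤ m := by omega
    rw [Fterm, Gterm]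
    simp only
    rw [show m - i - (m - j) = j - i by omega, show m - i - (k - i) = m - k by omega]
    rw [neg_pow w (j - i), neg_pow v (m - k)]
    have hsign : (-1 : ℂ) ^ (m - i) * ((-1 : ℂ) ^ (j - i) * (-1 : ℂ) ^ (m - k))
        = (-1 : ℂ) ^ (j + k) := by
      rw [← pow_add, ← pow_add]
      exact neg_one_pow_congr' (by omega)
    have hco := coeff_bij (m := m) (j := j) (k := k) (i := i) hj' hk' hij hik
    push_cast
    push_cast at hco
    rw [← hsign]
    linear_combination (-((-1 : ℂ) ^ (m - i) * ((-1 : ℂ) ^ (j - i) * (-1 : ℂ) ^ (m - k)) *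
      (z ^ (m - j) * v ^ (m - k) * (u ^ (k - i) * w ^ (j - i))))) * hco

/-! ### Expansion of the product -/

def gC (m j k : ℕ) (z w : ℂ) : ℂ :=
  (-1 : ℂ) ^ (j + k) * ((m.choose j * m.choose k : ℕ) : ℂ) *
    (z ^ (m - j) * (starRingEnd ℂ w) ^ (m - k))

lemma expand (m n : ℕ) (z w : ℂ) :
    cHermite m n z * cHermite n m w / (Nat.factorial n : ℂ)
      = ∑ j ∈ range (m + 1), ∑ k ∈ range (m + 1),
          gC m j k z w * hterm j k (starRingEnd ℂ z) w n := by
  rw [← cHermite_conj m n w, cHermite_eq m n z, cHermite_eq m n w]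
  rw [map_sum, Finset.sum_mul_sum, Finset.sum_div]
  refine Finset.sum_congr rfl fun j hj => ?_
  rw [Finset.sum_div]
  refine Finset.sum_congr rfl fun k hk => ?_
  rw [gC, hterm, apply_ite (starRingEnd ℂ), map_zero]
  by_cases h1 : j ≤ n <;> by_cases h2 : k ≤ n
  · rw [if_pos h1, if_pos h2, if_pos ⟨h1, h2⟩]
    simp only [map_mul, map_pow, map_neg, map_one, map_natCast, Complex.conj_conj]
    push_cast
    ring
  · rw [if_pos h1, if_neg h2, if_neg (by tauto)]
    simp
  · rw [if_neg h1, if_pos h2, if_neg (by tauto)]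
    simp
  · rw [if_neg h1, if_neg h2, if_neg (by tauto)]
    simp

/-! ### Main theorem -/

set_option maxHeartbeats 1000000 in
/-- `∑_{n≥0} H_{m,n}(z,z̄)·H_{n,m}(w,w̄)/n!` converges absolutely and
equals `m!·e^{z̄w}·L_m(|z−w|²)`. -/
theorem stmt11 (m : ℕ) (z w : ℂ) :
    Summable (fun n : ℕ => ‖cHermite m n z * cHermite n m w / (Nat.factorial n : ℂ)‖) ∧
      ∑' n : ℕ, cHermite m n z * cHermite n m w / (Nat.factorial n : ℂ) =
        (Nat.factorial m : ℂ) * Complex.exp (starRingEnd ℂ z * w) *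
          ((laguerre m (‖z - w‖ ^ 2) : ℝ) : ℂ) := by
  set u : ℂ := starRingEnd ℂ z with hu
  set v : ℂ := starRingEnd ℂ w with hv
  have hfs : Summable (fun n : ℕ => ‖cHermite m n z * cHermite n m w / (Nat.factorial n : ℂ)‖) := by
    have hb : ∀ n : ℕ, ‖cHermite m n z * cHermite n m w / (Nat.factorial n : ℂ)‖
        ≤ ∑ j ∈ range (m + 1), ∑ k ∈ range (m + 1), ‖gC m j k z w‖ * ‖hterm j k u w n‖ := by
      intro n
      rw [expand m n z w]
      refine (norm_sum_le _ _).trans ?_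
      refine Finset.sum_le_sum fun j _ => ?_
      refine (norm_sum_le _ _).trans ?_
      exact Finset.sum_le_sum fun k _ => le_of_eq (norm_mul _ _)
    refine Summable.of_nonneg_of_le (fun n => norm_nonneg _) hb ?_
    refine summable_sum fun j _ => summable_sum fun k _ => ?_
    exact (summable_hterm_norm j k u w).mul_left _
  refine ⟨hfs, ?_⟩
  have hsum_each : ∀ j k : ℕ, Summable (fun n => gC m j k z w * hterm j k u w n) := fun j k =>
    ((summable_hterm_norm j k u w).of_norm).mul_left _
  calc ∑' n : ℕ, cHermite m n z * cHermite n m w / (Nat.factorial n : ℂ)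
      = ∑' n : ℕ, ∑ j ∈ range (m + 1), ∑ k ∈ range (m + 1),
          gC m j k z w * hterm j k u w n := tsum_congr fun n => expand m n z w
    _ = ∑ j ∈ range (m + 1), ∑ k ∈ range (m + 1),
          ∑' n : ℕ, gC m j k z w * hterm j k u w n := by
        rw [Summable.tsum_finsetSum (fun j _ => summable_sum fun k _ => hsum_each j k)]
        exact Finset.sum_congr rfl fun j _ => Summable.tsum_finsetSum fun k _ => hsum_each j k
    _ = ∑ j ∈ range (m + 1), ∑ k ∈ range (m + 1),
          gC m j k z w * (Complex.exp (u * w) *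
            ∑ i ∈ range (min j k + 1),
              ((j.choose i * k.descFactorial i : ℕ) : ℂ) * (u ^ (k - i) * w ^ (j - i))) := by
        refine Finset.sum_congr rfl fun j _ => Finset.sum_congr rfl fun k _ => ?_
        rw [tsum_mul_left, inner_tsum j k u w]
    _ = Complex.exp (u * w) * ∑ j ∈ range (m + 1), ∑ k ∈ range (m + 1),
          ((-1 : ℂ) ^ (j + k) * ((m.choose j * m.choose k : ℕ) : ℂ) *
              (z ^ (m - j) * v ^ (m - k)) *
            ∑ i ∈ range (min j k + 1),
              ((j.choose i * k.descFactorial i : ℕ) : ℂ) * (u ^ (k - i) * w ^ (j - i))) := by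
        rw [Finset.mul_sum]
        refine Finset.sum_congr rfl fun j _ => ?_
        rw [Finset.mul_sum]
        refine Finset.sum_congr rfl fun k _ => ?_
        rw [gC]
        ring
    _ = Complex.exp (u * w) * ((m.factorial : ℂ) * ∑ r ∈ range (m + 1),
          (-1 : ℂ) ^ r * (m.choose r : ℂ) * ((z - w) * (u - v)) ^ r / (r.factorial : ℂ)) := by
        rw [star_id m z u w v]
    _ = (Nat.factorial m : ℂ) * Complex.exp (u * w)
          * ((laguerre m (‖z - w‖ ^ 2) : ℝ) : ℂ) := by
        have habs : (((‖z - w‖ ^ 2 : ℝ)) : ℂ) = (z - w) * (u - v) := by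
          rw [hu, hv, ← map_sub, Complex.sq_norm]
          exact (Complex.mul_conj (z - w)).symm
        have hlag : ((laguerre m (‖z - w‖ ^ 2) : ℝ) : ℂ)
            = ∑ r ∈ range (m + 1),
              (-1 : ℂ) ^ r * (m.choose r : ℂ) * ((z - w) * (u - v)) ^ r / (r.factorial : ℂ) := by
          rw [laguerre]
          push_cast
          rw [← habs]
          push_cast
          rfl
        rw [hlag]
        ring
end
end
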